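/- arXiv:math/0601203 — 3 statements merged into one kernel-verified Lean document; each statement's English description precedes it below -/
import Mathlib

section
/- For every integer d ≥ 0, the formal power series P_d(q) is the power series expansion at q = 0 of a rational function R_d ∈ ℚ(q), and this rational function is invariant under the substitution q ↦ 1/q, i.e. R_d(1/q) = R_d(q); concretely, there exist polynomials a, b ∈ ℚ[q] with b(0) ≠ 0 such that b(q)·P_d(q) = a(q) in ℚ⟦q⟧ and a(q)·q^{deg b}·b(1/q) = b(q)·q^{deg a}·a(1/q)·q^{deg b − deg a} as an equality of the rational functions a/b under q ↦ 1/q. -/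
open PowerSeries Finset

noncomputable section

/-- Convergence (in the formal, i.e. coefficientwise in both variables, topology of
`R⟦q⟧⟦v⟧`) of the infinite product of the family `f` to `F`. -/
def HasPSProd₂ {ι : Type} {R : Type} [CommRing R] (f : ι → PowerSeries (PowerSeries R))
    (F : PowerSeries (PowerSeries R)) : Prop :=
  ∀ d a : ℕ, ∃ s₀ : Finset ι, ∀ s : Finset ι, s₀ ⊆ s →
    (PowerSeries.coeff (R := R) a) ((PowerSeries.coeff (R := PowerSeries R) d) (∏ i ∈ s, f i)) =
      (PowerSeries.coeff (R := R) a) ((PowerSeries.coeff (R := PowerSeries R) d) F)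
/-- `P` is the family of power series `P_d(q) ∈ ℤ⟦q⟧` defined by
`∏_{m=1}^∞ (1 + q^m v)^m = ∑_{d=0}^∞ P_d(q) v^d` in `ℤ⟦q⟧⟦v⟧`; the outer power series
variable is `v` and the variable of the coefficient ring `ℤ⟦q⟧` is `q`. -/
def IsPdFamily (P : ℕ → PowerSeries ℤ) : Prop :=
  HasPSProd₂
    (fun m : ℕ =>
      (1 + PowerSeries.C (R := PowerSeries ℤ) ((PowerSeries.X : PowerSeries ℤ) ^ (m + 1)) *
        PowerSeries.X) ^ (m + 1))
    (PowerSeries.mk P)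

namespace PdAux

abbrev A := PowerSeries ℚ

/-! ### The rational factors, finite products, power sums -/

def fQ (m : ℕ) : PowerSeries A :=
  (1 + PowerSeries.C (R := A) ((PowerSeries.X : A) ^ (m + 1)) * PowerSeries.X) ^ (m + 1)

def FQ (N : ℕ) : PowerSeries A := ∏ m ∈ range N, fQ m

def PS (k N : ℕ) : A :=
  ∑ m ∈ range N, PowerSeries.C (R := ℚ) ((m : ℚ) + 1) * (PowerSeries.X : A) ^ ((m + 1) * k)

def D (k : ℕ) : A := PowerSeries.mk fun j => if k ∣ j then ((j / k : ℕ) : ℚ) else 0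

/-! ### Elementary coefficient lemmas -/

lemma coeff_X_pow_mul'' (k j : ℕ) (f : A) :
    (PowerSeries.coeff (R := ℚ) j) ((PowerSeries.X : A) ^ k * f) =
      if k ≤ j then PowerSeries.coeff (R := ℚ) (j - k) f else 0 := by
  by_cases h : k ≤ j
  · obtain ⟨i, rfl⟩ : ∃ i, j = i + k := ⟨j - k, (Nat.sub_add_cancel h).symm⟩
    simp [PowerSeries.coeff_X_pow_mul]
  · rw [if_neg h]
    exact (PowerSeries.X_pow_dvd_iff.1 (dvd_mul_right _ f)) j (by omega)

lemma coeff_one_sub_Xpow_mul (k j : ℕ) (f : A) :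
    (PowerSeries.coeff (R := ℚ) j) ((1 - (PowerSeries.X : A) ^ k) * f) =
      PowerSeries.coeff (R := ℚ) j f - (if k ≤ j then PowerSeries.coeff (R := ℚ) (j - k) f else 0) := by
  rw [sub_mul, one_mul, map_sub, coeff_X_pow_mul'']

lemma not_dvd_sub {k j : ℕ} (h : ¬ k ∣ j) (hle : k ≤ j) : ¬ k ∣ (j - k) := by
  intro hd
  exact h (by
    have := Nat.dvd_add hd (dvd_refl k)
    rwa [Nat.sub_add_cancel hle] at this)

lemma one_sub_Xpow_sq_mul_D {k : ℕ} (hk : 1 ≤ k) :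
    (1 - (PowerSeries.X : A) ^ k) ^ 2 * D k = (PowerSeries.X : A) ^ k := by
  set G : A := PowerSeries.mk fun j => if k ∣ j ∧ j ≠ 0 then (1 : ℚ) else 0 with hG
  have step1 : (1 - (PowerSeries.X : A) ^ k) * D k = G := by
    ext j
    rw [coeff_one_sub_Xpow_mul]
    simp only [D, hG, PowerSeries.coeff_mk]
    by_cases hdvd : k ∣ j
    · obtain ⟨c, rfl⟩ := hdvd
      rcases Nat.eq_zero_or_pos c with rfl | hc
      · simp [Nat.not_le.mpr (show 0 < k by omega)]
      · obtain ⟨c', rfl⟩ : ∃ c', c = c' + 1 := ⟨c - 1, by omega⟩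
        have hj : k * (c' + 1) = k * c' + k := by ring
        have hle : k ≤ k * (c' + 1) := by omega
        have hsub : k * (c' + 1) - k = k * c' := by omega
        rw [if_pos (Nat.dvd_mul_right k _), if_pos hle, hsub, if_pos (Nat.dvd_mul_right k c'),
          if_pos ⟨Nat.dvd_mul_right k _, by positivity⟩,
          Nat.mul_div_cancel_left _ (by omega : 0 < k),
          Nat.mul_div_cancel_left _ (by omega : 0 < k)]
        push_cast
        ring
    · rw [if_neg hdvd, if_neg (show ¬(k ∣ j ∧ j ≠ 0) from fun h => hdvd h.1)]
      by_cases hle : k ≤ j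
      · rw [if_pos hle, if_neg (not_dvd_sub hdvd hle)]
        ring
      · rw [if_neg hle]; ring
  have step2 : (1 - (PowerSeries.X : A) ^ k) * G = (PowerSeries.X : A) ^ k := by
    ext j
    rw [coeff_one_sub_Xpow_mul]
    simp only [hG, PowerSeries.coeff_mk, PowerSeries.coeff_X_pow]
    by_cases hdvd : k ∣ j
    · obtain ⟨c, rfl⟩ := hdvd
      rcases Nat.eq_zero_or_pos c with rfl | hc
      · simp only [Nat.mul_zero, Nat.zero_sub]
        rw [if_neg (show ¬(k ∣ 0 ∧ (0:ℕ) ≠ 0) from fun h => h.2 rfl),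
          if_neg (Nat.not_le.mpr (show 0 < k by omega)), if_neg (show ¬((0:ℕ) = k) by omega)]
        ring
      · obtain ⟨c', rfl⟩ : ∃ c', c = c' + 1 := ⟨c - 1, by omega⟩
        have hle : k ≤ k * (c' + 1) := by nlinarith
        have hsub : k * (c' + 1) - k = k * c' := by
          have : k * (c' + 1) = k * c' + k := by ring
          omega
        rw [if_pos ⟨Nat.dvd_mul_right k _, by positivity⟩, if_pos hle, hsub]
        rcases Nat.eq_zero_or_pos c' with rfl | hc'
        · have : k * (0 + 1) = k := by ring
          rw [if_neg (by simp), if_pos this]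
          ring
        · rw [if_pos ⟨Nat.dvd_mul_right k _, by positivity⟩,
            if_neg (by nlinarith : ¬ k * (c' + 1) = k)]
          ring
    · rw [if_neg (show ¬(k ∣ j ∧ j ≠ 0) from fun h => hdvd h.1),
        if_neg (show ¬(j = k) by rintro rfl; exact hdvd dvd_rfl)]
      by_cases hle : k ≤ j
      · rw [if_pos hle,
          if_neg (show ¬(k ∣ j - k ∧ j - k ≠ 0) from fun h => not_dvd_sub hdvd hle h.1)]
        ring
      · rw [if_neg hle]; ring
  calc (1 - (PowerSeries.X : A) ^ k) ^ 2 * D k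
      = (1 - (PowerSeries.X : A) ^ k) * ((1 - (PowerSeries.X : A) ^ k) * D k) := by ring
    _ = (PowerSeries.X : A) ^ k := by rw [step1, step2]

lemma coeff_PS {k N j : ℕ} (hk : 1 ≤ k) (hj : j < N) :
    PowerSeries.coeff (R := ℚ) j (PS k N) = PowerSeries.coeff (R := ℚ) j (D k) := by
  rw [PS, map_sum]
  simp only [PowerSeries.coeff_C_mul, PowerSeries.coeff_X_pow, D, PowerSeries.coeff_mk]
  by_cases hdvd : k ∣ j
  · obtain ⟨c, rfl⟩ := hdvd
    rcases Nat.eq_zero_or_pos c with rfl | hc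
    · rw [if_pos (Nat.dvd_mul_right k 0)]
      rw [Finset.sum_eq_zero, Nat.mul_zero, Nat.zero_div, Nat.cast_zero]
      intro m _
      rw [if_neg (show ¬ (k * 0 = (m + 1) * k) by
        intro h; rw [Nat.mul_zero] at h; nlinarith), mul_zero]
    · have hcN : c - 1 ∈ range N := by
        refine mem_range.2 ?_
        have : c ≤ k * c := Nat.le_mul_of_pos_left c (by omega)
        omega
      rw [Finset.sum_eq_single_of_mem (c - 1) hcN, if_pos (show k * c = ((c-1) + 1) * k by
          rw [Nat.sub_add_cancel hc]; ring), mul_one, if_pos (Nat.dvd_mul_right k c),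
          Nat.mul_div_cancel_left _ (show 0 < k by omega)]
      · push_cast [Nat.cast_sub hc]
        ring
      · intro m _ hm
        rw [if_neg, mul_zero]
        intro h
        have : c = m + 1 := by
          have := Nat.eq_of_mul_eq_mul_right (show 0 < k by omega)
            (show c * k = (m+1) * k by rw [← h]; ring)
          omega
        omega
  · rw [if_neg hdvd, Finset.sum_eq_zero]
    intro m _
    rw [if_neg, mul_zero]
    intro h
    exact hdvd ⟨m + 1, by rw [h]; ring⟩

/-! ### Vieta / Newton -/

lemma coeff_prod_one_add {ι : Type*} [DecidableEq ι] (s : Finset ι) (c : ι → A) (d : ℕ) :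
    (PowerSeries.coeff (R := A) d) (∏ i ∈ s, (1 + PowerSeries.C (R := A) (c i) * PowerSeries.X)) =
      ∑ t ∈ s.powersetCard d, ∏ i ∈ t, c i := by
  have h1 : ∀ i ∈ s, (1 + PowerSeries.C (R := A) (c i) * PowerSeries.X)
      = (PowerSeries.C (R := A) (c i) * PowerSeries.X + 1) := fun i _ => by ring
  rw [Finset.prod_congr rfl h1, Finset.prod_add]
  simp only [Finset.prod_const_one, mul_one]
  have h2 : ∀ t : Finset ι, (∏ i ∈ t, PowerSeries.C (R := A) (c i) * PowerSeries.X)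
      = PowerSeries.C (R := A) (∏ i ∈ t, c i) * PowerSeries.X ^ t.card := by
    intro t
    rw [Finset.prod_mul_distrib, Finset.prod_const, map_prod]
  rw [Finset.sum_congr rfl fun t _ => h2 t, map_sum]
  simp only [PowerSeries.coeff_C_mul, PowerSeries.coeff_X_pow]
  rw [Finset.powersetCard_eq_filter, Finset.sum_filter]
  apply Finset.sum_congr rfl
  intro t _
  by_cases h : t.card = d
  · rw [if_pos h, if_pos h.symm, mul_one]
  · rw [if_neg h, if_neg fun hh => h hh.symm, mul_zero]

abbrev σN (N : ℕ) : Type := Σ m : Fin N, Fin (m.1 + 1)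

def cN (N : ℕ) : σN N → A := fun j => (PowerSeries.X : A) ^ (j.1.1 + 1)

lemma FQ_eq (N : ℕ) : FQ N = ∏ j : σN N, (1 + PowerSeries.C (R := A) (cN N j) * PowerSeries.X) := by
  rw [← Finset.univ_sigma_univ, Finset.prod_sigma]
  simp only [cN]
  have h : ∀ m : Fin N, (∏ _i : Fin (m.1 + 1),
      (1 + PowerSeries.C (R := A) ((PowerSeries.X : A) ^ (m.1 + 1)) * PowerSeries.X)) = fQ m.1 := by
    intro m
    rw [Finset.prod_const, Finset.card_univ, Fintype.card_fin, fQ]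
  rw [Finset.prod_congr rfl (fun m _ => h m), FQ, ← Fin.prod_univ_eq_prod_range]

lemma aeval_esymm (N d : ℕ) :
    MvPolynomial.aeval (cN N) (MvPolynomial.esymm (σN N) ℚ d) = (PowerSeries.coeff (R := A) d) (FQ N) := by
  rw [FQ_eq, coeff_prod_one_add, MvPolynomial.esymm, map_sum]
  refine Finset.sum_congr rfl fun t _ => ?_
  rw [map_prod]
  exact Finset.prod_congr rfl fun j _ => MvPolynomial.aeval_X _ j

lemma aeval_psum (N k : ℕ) :
    MvPolynomial.aeval (cN N) (MvPolynomial.psum (σN N) ℚ k) = PS k N := by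
  rw [MvPolynomial.psum, map_sum]
  have h1 : ∀ j : σN N, MvPolynomial.aeval (cN N) ((MvPolynomial.X j : MvPolynomial (σN N) ℚ) ^ k)
      = (PowerSeries.X : A) ^ ((j.1.1 + 1) * k) := by
    intro j
    rw [map_pow, MvPolynomial.aeval_X, cN, ← pow_mul]
  rw [Finset.sum_congr rfl (fun j _ => h1 j), ← Finset.univ_sigma_univ, Finset.sum_sigma]
  rw [PS, ← Fin.sum_univ_eq_sum_range
    (fun m => PowerSeries.C (R := ℚ) ((m : ℚ) + 1) * (PowerSeries.X : A) ^ ((m + 1) * k)) N]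
  apply Finset.sum_congr rfl
  intro m _
  rw [show (∑ s : Fin (m.1 + 1), (PowerSeries.X : A) ^ (((⟨m, s⟩ : σN N).fst.1 + 1) * k))
      = ∑ _s : Fin (m.1 + 1), (PowerSeries.X : A) ^ ((m.1 + 1) * k) from rfl,
    Finset.sum_const, Finset.card_univ, Fintype.card_fin, nsmul_eq_mul]
  congr 1
  rw [← map_natCast (PowerSeries.C (R := ℚ)) (m.1 + 1)]
  push_cast
  ring

lemma newton (N k : ℕ) :
    (k : A) * (PowerSeries.coeff (R := A) k) (FQ N) =
      (-1 : A) ^ (k + 1) * ∑ a ∈ (antidiagonal k).filter (fun a => a.1 < k),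
        (-1 : A) ^ a.1 * (PowerSeries.coeff (R := A) a.1) (FQ N) * PS a.2 N := by
  have h := congrArg (MvPolynomial.aeval (cN N)) (MvPolynomial.mul_esymm_eq_sum (σN N) ℚ k)
  simp only [map_mul, map_natCast, map_pow, map_neg, map_one, map_sum,
    aeval_esymm, aeval_psum] at h
  exact h

/-! ### Transfer from the hypothesis -/

def μ : PowerSeries ℤ →+* A := PowerSeries.map (Int.castRingHom ℚ)

lemma map_fZ (m : ℕ) :
    PowerSeries.map μ ((1 + PowerSeries.C (R := PowerSeries ℤ)
        ((PowerSeries.X : PowerSeries ℤ) ^ (m + 1)) * PowerSeries.X) ^ (m + 1)) = fQ m := by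
  simp only [fQ, μ, map_pow, map_add, map_one, map_mul, PowerSeries.map_C, PowerSeries.map_X]

lemma hQcoeff {P : ℕ → PowerSeries ℤ} (hP : IsPdFamily P) (d a : ℕ) :
    ∃ N₀ : ℕ, ∀ N, N₀ ≤ N →
      (PowerSeries.coeff (R := ℚ) a) ((PowerSeries.coeff (R := A) d) (FQ N)) =
        (PowerSeries.coeff (R := ℚ) a) ((P d).map (Int.castRingHom ℚ)) := by
  obtain ⟨s₀, hs₀⟩ := hP d a
  refine ⟨s₀.sup id + 1, fun N hN => ?_⟩
  have hsub : s₀ ⊆ range N := fun i hi =>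
    mem_range.2 (lt_of_lt_of_le (Nat.lt_succ_of_le (Finset.le_sup (f := id) hi)) hN)
  have h := congrArg (Int.castRingHom ℚ) (hs₀ (range N) hsub)
  have hF : FQ N = PowerSeries.map μ (∏ i ∈ range N,
      (1 + PowerSeries.C (R := PowerSeries ℤ) ((PowerSeries.X : PowerSeries ℤ) ^ (i + 1)) *
        PowerSeries.X) ^ (i + 1)) := by
    rw [map_prod]
    exact (Finset.prod_congr rfl fun i _ => (map_fZ i).symm)
  rw [hF, PowerSeries.coeff_map, μ, PowerSeries.coeff_map, PowerSeries.coeff_map]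
  rw [PowerSeries.coeff_mk] at h
  exact h

/-! ### The recursion -/

lemma neg_one_pow_mul (e : ℕ) (f : A) : (-1 : A) ^ e * f = ((-1 : ℤ) ^ e) • f := by
  rw [zsmul_eq_mul]; push_cast; ring

lemma Q_zero {P : ℕ → PowerSeries ℤ} (hP : IsPdFamily P) :
    (P 0).map (Int.castRingHom ℚ) = 1 := by
  ext n
  obtain ⟨N₀, hN₀⟩ := hQcoeff hP 0 n
  rw [← hN₀ N₀ le_rfl, FQ_eq, coeff_prod_one_add, Finset.powersetCard_zero,
    Finset.sum_singleton, Finset.prod_empty]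

lemma recursion {P : ℕ → PowerSeries ℤ} (hP : IsPdFamily P) (d : ℕ) :
    (d : A) * (P d).map (Int.castRingHom ℚ) =
      (-1 : A) ^ (d + 1) * ∑ a ∈ (antidiagonal d).filter (fun a => a.1 < d),
        (-1 : A) ^ a.1 * ((P a.1).map (Int.castRingHom ℚ)) * D a.2 := by
  ext n
  choose g hg using (fun d' n' => hQcoeff hP d' n')
  set N := (n + 1) + (range (d + 1)).sup (fun d' => (range (n + 1)).sup (g d')) with hNdef
  have hnN : n < N := lt_of_lt_of_le (Nat.lt_succ_self n) (Nat.le_add_right _ _)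
  have key : ∀ d', d' ≤ d → ∀ n', n' ≤ n →
      PowerSeries.coeff (R := ℚ) n' (PowerSeries.coeff (R := A) d' (FQ N))
        = PowerSeries.coeff (R := ℚ) n' ((P d').map (Int.castRingHom ℚ)) := by
    intro d' hd' n' hn'
    refine hg d' n' N ?_
    calc g d' n' ≤ (range (n + 1)).sup (g d') :=
          Finset.le_sup (f := g d') (mem_range.2 (Nat.lt_succ_of_le hn'))
      _ ≤ (range (d + 1)).sup (fun d'' => (range (n + 1)).sup (g d'')) :=
          Finset.le_sup (f := fun d'' => (range (n + 1)).sup (g d'')) (mem_range.2 (Nat.lt_succ_of_le hd'))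
      _ ≤ N := Nat.le_add_left _ _
  have hnewt := congrArg (PowerSeries.coeff (R := ℚ) n) (newton N d)
  -- rewrite LHS
  rw [show ((d : A)) = PowerSeries.C (R := ℚ) ((d : ℕ) : ℚ) from (map_natCast (PowerSeries.C (R := ℚ)) d).symm,
    PowerSeries.coeff_C_mul] at hnewt ⊢
  rw [key d le_rfl n le_rfl] at hnewt
  rw [hnewt]
  -- rewrite RHS
  rw [neg_one_pow_mul, neg_one_pow_mul, map_zsmul, map_zsmul]
  congr 1
  rw [map_sum, map_sum]
  refine Finset.sum_congr rfl fun a ha => ?_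
  obtain ⟨ha1, ha2⟩ := Finset.mem_filter.1 ha
  have hsum : a.1 + a.2 = d := Finset.HasAntidiagonal.mem_antidiagonal.1 ha1
  rw [mul_assoc, mul_assoc, neg_one_pow_mul, neg_one_pow_mul, map_zsmul, map_zsmul]
  congr 1
  rw [PowerSeries.coeff_mul, PowerSeries.coeff_mul]
  refine Finset.sum_congr rfl fun p hp => ?_
  have hpsum : p.1 + p.2 = n := Finset.HasAntidiagonal.mem_antidiagonal.1 hp
  rw [key a.1 (by omega) p.1 (by omega),
    coeff_PS (k := a.2) (N := N) (j := p.2) (by omega) (by omega)]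


/-! ### Rational functions invariant under `q ↦ 1/q` -/

def ψ : Polynomial ℚ →+* RatFunc ℚ := algebraMap (Polynomial ℚ) (RatFunc ℚ)

def φ : Polynomial ℚ →+* RatFunc ℚ :=
  Polynomial.eval₂RingHom (algebraMap ℚ (RatFunc ℚ)) (RatFunc.X)⁻¹

/-- `F` is the power series expansion of a rational function `a / b` (with `b(0) ≠ 0`) that
is invariant under `q ↦ 1/q`. -/
def Good (F : A) : Prop := ∃ a b : Polynomial ℚ, b.coeff 0 ≠ 0 ∧
  (b : PowerSeries ℚ) * F = (a : PowerSeries ℚ) ∧ φ a * ψ b = ψ a * φ b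

lemma Good_one : Good 1 :=
  ⟨1, 1, by norm_num, by norm_num, by norm_num⟩

lemma Good_C (r : ℚ) : Good (PowerSeries.C (R := ℚ) r) := by
  refine ⟨Polynomial.C r, 1, by norm_num, ?_, ?_⟩
  · rw [Polynomial.coe_one, one_mul, Polynomial.coe_C]
  · simp [φ, ψ]

lemma Good_mul {F G : A} (hF : Good F) (hG : Good G) : Good (F * G) := by
  obtain ⟨a, b, hb0, hba, hinva⟩ := hF
  obtain ⟨c, e, he0, hec, hinvc⟩ := hG
  refine ⟨a * c, b * e, ?_, ?_, ?_⟩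
  · rw [Polynomial.mul_coeff_zero]; exact mul_ne_zero hb0 he0
  · rw [Polynomial.coe_mul, Polynomial.coe_mul]
    calc (b : A) * (e : A) * (F * G) = ((b : A) * F) * ((e : A) * G) := by ring
      _ = (a : A) * (c : A) := by rw [hba, hec]
  · simp only [map_mul]
    calc φ a * φ c * (ψ b * ψ e) = (φ a * ψ b) * (φ c * ψ e) := by ring
      _ = (ψ a * φ b) * (ψ c * φ e) := by rw [hinva, hinvc]
      _ = ψ a * ψ c * (φ b * φ e) := by ring

lemma Good_add {F G : A} (hF : Good F) (hG : Good G) : Good (F + G) := by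
  obtain ⟨a, b, hb0, hba, hinva⟩ := hF
  obtain ⟨c, e, he0, hec, hinvc⟩ := hG
  refine ⟨a * e + c * b, b * e, ?_, ?_, ?_⟩
  · rw [Polynomial.mul_coeff_zero]; exact mul_ne_zero hb0 he0
  · rw [Polynomial.coe_add, Polynomial.coe_mul, Polynomial.coe_mul, Polynomial.coe_mul]
    calc (b : A) * (e : A) * (F + G)
        = ((b : A) * F) * (e : A) + ((e : A) * G) * (b : A) := by ring
      _ = (a : A) * (e : A) + (c : A) * (b : A) := by rw [hba, hec]
  · simp only [map_mul, map_add]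
    linear_combination (φ e * ψ e) * hinva + (φ b * ψ b) * hinvc

lemma Good_zero : Good 0 := by
  have := Good_C 0
  simpa using this

lemma Good_sum {ι : Type*} (s : Finset ι) (f : ι → A) (h : ∀ i ∈ s, Good (f i)) :
    Good (∑ i ∈ s, f i) :=
  Finset.sum_induction f Good (fun _ _ => Good_add) Good_zero h

lemma Good_D {k : ℕ} (hk : 1 ≤ k) : Good (D k) := by
  refine ⟨Polynomial.X ^ k, (1 - Polynomial.X ^ k) ^ 2, ?_, ?_, ?_⟩
  · rw [Polynomial.coeff_zero_eq_eval_zero]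
    simp [zero_pow (show k ≠ 0 by omega)]
  · have h1 : (((1 - Polynomial.X ^ k) ^ 2 : Polynomial ℚ) : A)
        = (1 - (PowerSeries.X : A) ^ k) ^ 2 := by
      rw [← Polynomial.coeToPowerSeries.ringHom_apply, map_pow, map_sub, map_one, map_pow,
        Polynomial.coeToPowerSeries.ringHom_apply, Polynomial.coe_X]
    have h2 : ((Polynomial.X ^ k : Polynomial ℚ) : A) = (PowerSeries.X : A) ^ k := by
      rw [Polynomial.coe_pow, Polynomial.coe_X]
    rw [h1, h2, one_sub_Xpow_sq_mul_D hk]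
  · have hφX : φ Polynomial.X = (RatFunc.X : RatFunc ℚ)⁻¹ := Polynomial.eval₂_X _ _
    have hψX : ψ Polynomial.X = (RatFunc.X : RatFunc ℚ) := rfl
    simp only [map_pow, map_sub, map_one, hφX, hψX]
    have hX : (RatFunc.X : RatFunc ℚ) ≠ 0 := RatFunc.X_ne_zero
    simp only [inv_pow]
    field_simp
    ring

lemma eval2X (p : Polynomial ℚ) :
    Polynomial.eval₂ (algebraMap ℚ (RatFunc ℚ)) RatFunc.X p = ψ p := by
  rw [← Polynomial.aeval_def]
  rw [show (RatFunc.X : RatFunc ℚ) = algebraMap (Polynomial ℚ) (RatFunc ℚ) Polynomial.X from rfl]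
  rw [Polynomial.aeval_algebraMap_apply, Polynomial.aeval_X_left_apply]
  rfl

lemma psi_rev (f : Polynomial ℚ) :
    ψ f.reverse = φ f * RatFunc.X ^ f.natDegree := by
  letI : Invertible (RatFunc.X : RatFunc ℚ)⁻¹ :=
    invertibleOfNonzero (inv_ne_zero RatFunc.X_ne_zero)
  have h := Polynomial.eval₂_reverse_mul_pow (algebraMap ℚ (RatFunc ℚ)) (RatFunc.X)⁻¹ f
  rw [invOf_eq_inv, inv_inv, eval2X] at h
  have hphi : Polynomial.eval₂ (algebraMap ℚ (RatFunc ℚ)) (RatFunc.X)⁻¹ f = φ f := rfl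
  rw [hphi] at h
  calc ψ f.reverse
      = ψ f.reverse * ((RatFunc.X : RatFunc ℚ)⁻¹ ^ f.natDegree * RatFunc.X ^ f.natDegree) := by
        rw [← mul_pow, inv_mul_cancel₀ RatFunc.X_ne_zero, one_pow, mul_one]
    _ = (ψ f.reverse * (RatFunc.X : RatFunc ℚ)⁻¹ ^ f.natDegree) * RatFunc.X ^ f.natDegree := by
        ring
    _ = φ f * RatFunc.X ^ f.natDegree := by rw [h]

lemma invariance_poly {a b : Polynomial ℚ} (h : φ a * ψ b = ψ a * φ b) :
    a * b.reverse * Polynomial.X ^ a.natDegree = b * a.reverse * Polynomial.X ^ b.natDegree := by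
  apply RatFunc.algebraMap_injective ℚ
  show ψ _ = ψ _
  simp only [map_mul, map_pow, psi_rev]
  rw [show ψ Polynomial.X = RatFunc.X from rfl]
  linear_combination (-((RatFunc.X : RatFunc ℚ) ^ a.natDegree * RatFunc.X ^ b.natDegree)) * h

lemma final_of_inv {a b : Polynomial ℚ} (ha : a ≠ 0) (hb0 : b.coeff 0 ≠ 0)
    (h : a * b.reverse * Polynomial.X ^ a.natDegree
        = b * a.reverse * Polynomial.X ^ b.natDegree) :
    a * b.reverse = b * a.reverse * Polynomial.X ^ (b.natDegree - a.natDegree) := by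
  have hb : b ≠ 0 := fun hb => hb0 (by simp [hb])
  have hrb : b.reverse ≠ 0 := by simpa [Polynomial.reverse_eq_zero] using hb
  have hra : a.reverse ≠ 0 := by simpa [Polynomial.reverse_eq_zero] using ha
  have htb : b.natTrailingDegree = 0 := by
    rw [Polynomial.natTrailingDegree_eq_zero]; exact Or.inr hb0
  have hta : a.natTrailingDegree ≤ a.natDegree := Polynomial.natTrailingDegree_le_natDegree a
  have hXa : (Polynomial.X : Polynomial ℚ) ^ a.natDegree ≠ 0 :=
    pow_ne_zero _ Polynomial.X_ne_zero
  have hXb : (Polynomial.X : Polynomial ℚ) ^ b.natDegree ≠ 0 :=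
    pow_ne_zero _ Polynomial.X_ne_zero
  have hdeg := congrArg Polynomial.natDegree h
  rw [Polynomial.natDegree_mul (mul_ne_zero ha hrb) hXa,
    Polynomial.natDegree_mul ha hrb,
    Polynomial.natDegree_mul (mul_ne_zero hb hra) hXb,
    Polynomial.natDegree_mul hb hra,
    Polynomial.natDegree_X_pow, Polynomial.natDegree_X_pow,
    Polynomial.reverse_natDegree, Polynomial.reverse_natDegree] at hdeg
  have hle : a.natDegree ≤ b.natDegree := by omega
  apply mul_right_cancel₀ hXa
  rw [h, mul_assoc (b * a.reverse), ← pow_add, Nat.sub_add_cancel hle]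

lemma Good_Q {P : ℕ → PowerSeries ℤ} (hP : IsPdFamily P) (d : ℕ) :
    Good ((P d).map (Int.castRingHom ℚ)) := by
  induction d using Nat.strong_induction_on with
  | _ d ih =>
    rcases Nat.eq_zero_or_pos d with rfl | hd
    · rw [Q_zero hP]; exact Good_one
    · have hd0 : ((d : ℚ)) ≠ 0 := Nat.cast_ne_zero.2 (by omega)
      have hQd : (P d).map (Int.castRingHom ℚ) =
          PowerSeries.C (R := ℚ) (d : ℚ)⁻¹ * ((-1 : A) ^ (d + 1) *
            ∑ a ∈ (antidiagonal d).filter (fun a => a.1 < d),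
              (-1 : A) ^ a.1 * ((P a.1).map (Int.castRingHom ℚ)) * D a.2) := by
        rw [← recursion hP d, ← mul_assoc,
          show ((d : A)) = PowerSeries.C (R := ℚ) ((d : ℕ) : ℚ) from (map_natCast _ d).symm,
          ← map_mul, inv_mul_cancel₀ hd0, map_one, one_mul]
      rw [hQd]
      refine Good_mul (Good_C _) (Good_mul ?_ (Good_sum _ _ fun a ha => ?_))
      · rw [show ((-1 : A) ^ (d + 1)) = PowerSeries.C (R := ℚ) ((-1 : ℚ) ^ (d + 1)) by
          rw [map_pow, map_neg, map_one]]
        exact Good_C _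
      · obtain ⟨ha1, ha2⟩ := Finset.mem_filter.1 ha
        have hsum := Finset.HasAntidiagonal.mem_antidiagonal.1 ha1
        refine Good_mul (Good_mul ?_ (ih a.1 (by omega))) (Good_D (by omega))
        rw [show ((-1 : A) ^ a.1) = PowerSeries.C (R := ℚ) ((-1 : ℚ) ^ a.1) by
          rw [map_pow, map_neg, map_one]]
        exact Good_C _

end PdAux

/-- Each `P_d(q)` is the power series expansion at `q = 0` of a rational
function which is invariant under `q ↦ 1/q`: there are polynomials `a, b ∈ ℚ[q]` with
`b(0) ≠ 0`, with `b(q)·P_d(q) = a(q)` in `ℚ⟦q⟧`, and with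
`a(q)·(q^{deg b}·b(1/q)) = b(q)·(q^{deg a}·a(1/q))·q^{deg b - deg a}` (the polynomial
`q^{deg p}·p(1/q)` being `Polynomial.reverse p`). -/
theorem Pd_rational_and_invariant_under_q_inv
    (P : ℕ → PowerSeries ℤ) (hP : IsPdFamily P) (d : ℕ) :
    ∃ a b : Polynomial ℚ, b.coeff 0 ≠ 0 ∧
      (b : PowerSeries ℚ) * (P d).map (Int.castRingHom ℚ) = (a : PowerSeries ℚ) ∧
      a * b.reverse = b * a.reverse * Polynomial.X ^ (b.natDegree - a.natDegree) := by
  obtain ⟨a, b, hb0, hba, hinv⟩ := PdAux.Good_Q hP d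
  by_cases ha : a = 0
  · subst ha
    exact ⟨0, b, hb0, hba, by simp⟩
  · exact ⟨a, b, hb0, hba, PdAux.final_of_inv ha hb0 (PdAux.invariance_poly hinv)⟩
end
end

section
/- The power series P_2(q) satisfies (1 − q)^4 (1 + q)^2 · P_2(q) = 2q^3 in ℤ⟦q⟧; equivalently, P_2(q) is the power series expansion of the rational function 2q^3/((1−q)^4 (1+q)^2), and hence (−1)^2 P_2(−q) is the expansion of −2q^3/((1+q)^4 (1−q)^2). -/
open PowerSeries Finset

noncomputable section

/- ### Auxiliary material -/

lemma coeff_one_add_C_mul_X_pow {R : Type} [CommRing R] (c : R) (e j : ℕ) :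
    (PowerSeries.coeff (R := R) j) ((1 + PowerSeries.C (R := R) c * PowerSeries.X) ^ e) =
      (e.choose j : R) * c ^ j := by
  rw [add_comm, add_pow, map_sum]
  have h : ∀ k ∈ Finset.range (e + 1),
      (PowerSeries.coeff (R := R) j) ((PowerSeries.C (R := R) c * PowerSeries.X) ^ k * 1 ^ (e - k) * (e.choose k : R⟦X⟧))
      = if j = k then (e.choose k : R) * c ^ k else 0 := by
    intro k _
    rw [one_pow, mul_one, mul_pow, ← map_pow, ← map_natCast (PowerSeries.C (R := R)) (e.choose k),
      mul_comm ((PowerSeries.C (R := R)) (c ^ k)), mul_assoc, ← map_mul, mul_comm,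
      PowerSeries.coeff_C_mul, PowerSeries.coeff_X_pow]
    split <;> ring
  rw [Finset.sum_congr rfl h]
  by_cases hj : j ≤ e
  · rw [Finset.sum_ite_eq (Finset.range (e+1)) j (fun k => (e.choose k : R) * c ^ k)]
    simp [Nat.lt_succ_of_le hj]
  · push_neg at hj
    rw [Finset.sum_eq_zero, Nat.choose_eq_zero_of_lt hj]
    · simp
    · intro k hk
      simp only [Finset.mem_range] at hk
      rw [if_neg (by omega)]

/-- The `m`-th factor of the product. -/
def fser (m : ℕ) : PowerSeries (PowerSeries ℤ) :=
  (1 + PowerSeries.C (R := PowerSeries ℤ) ((PowerSeries.X : PowerSeries ℤ) ^ (m + 1)) *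
    PowerSeries.X) ^ (m + 1)

lemma coeff_fser (m j : ℕ) :
    (PowerSeries.coeff (R := PowerSeries ℤ) j) (fser m) =
      ((m+1).choose j : PowerSeries ℤ) * (PowerSeries.X : PowerSeries ℤ) ^ ((m+1)*j) := by
  rw [fser, coeff_one_add_C_mul_X_pow, ← pow_mul]

/-- Partial sums `L N = ∑_{m=1}^{N} m q^m`. -/
def Lser : ℕ → PowerSeries ℤ
  | 0 => 0
  | (N+1) => Lser N + ((N+1 : ℕ) : PowerSeries ℤ) * PowerSeries.X ^ (N+1)

/-- `T N` = coefficient of `v^2` in the partial product over `m < N`. -/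
def Tser : ℕ → PowerSeries ℤ
  | 0 => 0
  | (N+1) => Tser N + (((N+1).choose 2 : ℕ) : PowerSeries ℤ) * PowerSeries.X ^ ((N+1)*2)
      + ((N+1 : ℕ) : PowerSeries ℤ) * PowerSeries.X ^ (N+1) * Lser N

lemma constantCoeff_fser (m : ℕ) :
    (PowerSeries.constantCoeff (R := PowerSeries ℤ)) (fser m) = 1 := by
  rw [fser, map_pow, map_add, map_one, map_mul, PowerSeries.constantCoeff_C,
    PowerSeries.constantCoeff_X, mul_zero, add_zero, one_pow]

lemma coeff_zero_prod (s : Finset ℕ) :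
    (PowerSeries.coeff (R := PowerSeries ℤ) 0) (∏ m ∈ s, fser m) = 1 := by
  rw [PowerSeries.coeff_zero_eq_constantCoeff, map_prod]
  exact Finset.prod_eq_one fun m _ => constantCoeff_fser m

lemma coeff_one_prod (N : ℕ) :
    (PowerSeries.coeff (R := PowerSeries ℤ) 1) (∏ m ∈ Finset.range N, fser m) = Lser N := by
  induction N with
  | zero => simp [Lser]
  | succ N ih =>
      rw [Finset.prod_range_succ, PowerSeries.coeff_mul]
      have : (Finset.HasAntidiagonal.antidiagonal 1 : Finset (ℕ×ℕ)) = {(0,1),(1,0)} := by decide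
      rw [this]
      rw [Finset.sum_insert (by decide), Finset.sum_singleton]
      simp only [ih, coeff_zero_prod, coeff_fser, Lser]
      simp [Nat.choose_one_right]
      ring

lemma coeff_two_prod (N : ℕ) :
    (PowerSeries.coeff (R := PowerSeries ℤ) 2) (∏ m ∈ Finset.range N, fser m) = Tser N := by
  induction N with
  | zero => simp [Tser]
  | succ N ih =>
      rw [Finset.prod_range_succ, PowerSeries.coeff_mul]
      have : (Finset.HasAntidiagonal.antidiagonal 2 : Finset (ℕ×ℕ)) = {(0,2),(1,1),(2,0)} := by decide
      rw [this]
      rw [Finset.sum_insert (by decide), Finset.sum_insert (by decide), Finset.sum_singleton]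
      simp only [ih, coeff_zero_prod, coeff_one_prod, coeff_fser, Tser]
      simp [Nat.choose_one_right]
      ring

lemma coeff_fser_q (m j i : ℕ) (hj : 1 ≤ j) (hi : i ≤ m) :
    (PowerSeries.coeff (R := ℤ) i) ((PowerSeries.coeff (R := PowerSeries ℤ) j) (fser m)) = 0 := by
  rw [coeff_fser, ← map_natCast (PowerSeries.C (R := ℤ)) ((m+1).choose j), PowerSeries.coeff_C_mul,
    PowerSeries.coeff_X_pow, if_neg (by nlinarith), mul_zero]

lemma tail_vanish (a : ℕ) (t : Finset ℕ) (ht : ∀ m ∈ t, a < m) :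
    ∀ j i, 1 ≤ j → i ≤ a →
      (PowerSeries.coeff (R := ℤ) i) ((PowerSeries.coeff (R := PowerSeries ℤ) j) (∏ m ∈ t, fser m)) = 0 := by
  induction t using Finset.induction with
  | empty =>
      intro j i hj _
      rw [Finset.prod_empty, PowerSeries.coeff_one, if_neg (by omega), map_zero]
  | @insert m t' hm ih =>
      intro j i hj hi
      rw [Finset.prod_insert hm, PowerSeries.coeff_mul, map_sum]
      apply Finset.sum_eq_zero
      intro p hp
      rw [Finset.HasAntidiagonal.mem_antidiagonal] at hp
      rcases Nat.eq_zero_or_pos p.1 with h1 | h1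
      · have h2 : p.2 = j := by omega
        have hc : (PowerSeries.coeff (R := PowerSeries ℤ) p.1) (fser m) = 1 := by
          rw [h1, coeff_fser]; simp
        rw [hc, h2, one_mul]
        exact ih (fun n hn => ht n (Finset.mem_insert_of_mem hn)) j i hj hi
      · rw [PowerSeries.coeff_mul]
        apply Finset.sum_eq_zero
        intro q hq
        rw [Finset.HasAntidiagonal.mem_antidiagonal] at hq
        have : (PowerSeries.coeff (R := ℤ) q.1) ((PowerSeries.coeff (R := PowerSeries ℤ) p.1) (fser m)) = 0 := by
          apply coeff_fser_q m p.1 q.1 h1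
          have := ht m (Finset.mem_insert_self m t')
          omega
        rw [this, zero_mul]

lemma L_closed (N : ℕ) : (1 - PowerSeries.X)^2 * Lser N =
    PowerSeries.X - ((N+1 : ℕ) : PowerSeries ℤ) * PowerSeries.X ^ (N+1)
      + ((N : ℕ) : PowerSeries ℤ) * PowerSeries.X ^ (N+2) := by
  induction N with
  | zero => simp [Lser]
  | succ N ih =>
      rw [Lser, mul_add, ih]
      push_cast
      ring

def Vser (N : ℕ) : PowerSeries ℤ :=
  (1+PowerSeries.X)^2 * (2*((N : PowerSeries ℤ) * PowerSeries.X - ((N : PowerSeries ℤ)+1))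
      + PowerSeries.X^N * ((N : PowerSeries ℤ) * PowerSeries.X - ((N : PowerSeries ℤ)+1))^2)
    - (1-PowerSeries.X)^2 * PowerSeries.X^N *
        ((N : PowerSeries ℤ) * PowerSeries.X^2 - ((N : PowerSeries ℤ)+1))

lemma nat_c2 (N : ℕ) : (N+1).choose 2 * 2 = (N+1)*N := by
  induction N with
  | zero => rfl
  | succ N ih => rw [Nat.choose_succ_succ (N+1) 1]; rw [Nat.choose_one_right]; nlinarith

lemma GT_closed (N : ℕ) :
    2 * ((1 - PowerSeries.X)^4 * (1 + PowerSeries.X)^2 * Tser N) =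
      4 * PowerSeries.X^3 + PowerSeries.X^(N+2) * Vser N := by
  induction N with
  | zero => simp [Tser, Vser]; ring
  | succ N ih =>
      have hc : (((N+1).choose 2 : ℕ) : PowerSeries ℤ) * 2
          = ((N : PowerSeries ℤ)+1) * (N : PowerSeries ℤ) := by
        have h := congrArg (fun n : ℕ => (n : PowerSeries ℤ)) (nat_c2 N)
        push_cast at h
        linear_combination h
      have hL := L_closed N
      push_cast at hL
      simp only [Vser] at ih ⊢
      rw [Tser]
      push_cast at ih ⊢
      linear_combination ih
        + (2*((N : PowerSeries ℤ)+1)*PowerSeries.X^(N+1)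
            *(1+PowerSeries.X)^2*(1-PowerSeries.X)^2) * hL
        + ((1-PowerSeries.X)^4*(1+PowerSeries.X)^2*PowerSeries.X^((N+1)*2)) * hc

lemma coeff_P_two (P : ℕ → PowerSeries ℤ) (hP : IsPdFamily P) (a N : ℕ) (haN : a < N) :
    (PowerSeries.coeff (R := ℤ) a) (P 2) = (PowerSeries.coeff (R := ℤ) a) (Tser N) := by
  obtain ⟨s₀, hs⟩ := hP 2 a
  have h1 := hs (s₀ ∪ Finset.range N) Finset.subset_union_left
  have hfser : (fun m : ℕ =>
      (1 + PowerSeries.C (R := PowerSeries ℤ) ((PowerSeries.X : PowerSeries ℤ) ^ (m + 1)) *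
        PowerSeries.X) ^ (m + 1)) = fser := rfl
  rw [hfser, PowerSeries.coeff_mk] at h1
  rw [← h1]
  rw [← Finset.prod_sdiff (Finset.subset_union_right : Finset.range N ⊆ s₀ ∪ Finset.range N)]
  rw [PowerSeries.coeff_mul]
  have hant : (Finset.HasAntidiagonal.antidiagonal 2 : Finset (ℕ×ℕ)) = {(0,2),(1,1),(2,0)} := by decide
  rw [hant, Finset.sum_insert (by decide), Finset.sum_insert (by decide), Finset.sum_singleton]
  have htail : ∀ m ∈ (s₀ ∪ Finset.range N) \ Finset.range N, a < m := by
    intro m hm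
    rw [Finset.mem_sdiff, Finset.mem_range] at hm
    omega
  have hz : ∀ j1 j2 : ℕ, 1 ≤ j1 →
      (PowerSeries.coeff (R := ℤ) a)
        ((PowerSeries.coeff (R := PowerSeries ℤ) j1) (∏ m ∈ (s₀ ∪ Finset.range N) \ Finset.range N, fser m) *
         (PowerSeries.coeff (R := PowerSeries ℤ) j2) (∏ m ∈ Finset.range N, fser m)) = 0 := by
    intro j1 j2 hj1
    rw [PowerSeries.coeff_mul]
    apply Finset.sum_eq_zero
    intro q hq
    rw [Finset.HasAntidiagonal.mem_antidiagonal] at hq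
    rw [tail_vanish a _ htail j1 q.1 hj1 (by omega), zero_mul]
  rw [map_add, map_add, hz 1 1 le_rfl, hz 2 0 (by omega), coeff_zero_prod, one_mul,
    coeff_two_prod]
  simp

/-- `(1 - q)⁴ (1 + q)² · P₂(q) = 2q³` in `ℤ⟦q⟧`, i.e. `P₂(q)` is the
power series expansion of `2q³/((1-q)⁴(1+q)²)`; hence `(-1)² P₂(-q)` is the expansion of
`-2q³/((1+q)⁴(1-q)²)` (the substitution `q ↦ -q` being `PowerSeries.rescale (-1)`). -/
theorem P_two (P : ℕ → PowerSeries ℤ) (hP : IsPdFamily P) :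
    (1 - PowerSeries.X) ^ 4 * (1 + PowerSeries.X) ^ 2 * P 2 =
        2 * (PowerSeries.X : PowerSeries ℤ) ^ 3 ∧
      (1 + PowerSeries.X) ^ 4 * (1 - PowerSeries.X) ^ 2 *
          ((-1 : PowerSeries ℤ) ^ 2 * PowerSeries.rescale (-1) (P 2)) =
        -(2 * (PowerSeries.X : PowerSeries ℤ) ^ 3) := by
  have h1 : (1 - PowerSeries.X) ^ 4 * (1 + PowerSeries.X) ^ 2 * P 2 =
      2 * (PowerSeries.X : PowerSeries ℤ) ^ 3 := by
    ext a
    have key : (PowerSeries.coeff (R := ℤ) a) ((1 - PowerSeries.X) ^ 4 * (1 + PowerSeries.X) ^ 2 * P 2)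
        = (PowerSeries.coeff (R := ℤ) a)
            ((1 - PowerSeries.X) ^ 4 * (1 + PowerSeries.X) ^ 2 * Tser (a+1)) := by
      rw [PowerSeries.coeff_mul, PowerSeries.coeff_mul]
      apply Finset.sum_congr rfl
      intro p hp
      rw [Finset.HasAntidiagonal.mem_antidiagonal] at hp
      rw [coeff_P_two P hP p.2 (a+1) (by omega)]
    have hGT := congrArg (PowerSeries.coeff (R := ℤ) a) (GT_closed (a+1))
    have hv : (PowerSeries.coeff (R := ℤ) a) (PowerSeries.X^(a+1+2) * Vser (a+1)) = 0 := by
      rw [PowerSeries.coeff_mul]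
      apply Finset.sum_eq_zero
      intro q hq
      rw [Finset.HasAntidiagonal.mem_antidiagonal] at hq
      rw [PowerSeries.coeff_X_pow, if_neg (by omega), zero_mul]
    rw [two_mul, map_add, map_add, hv, add_zero] at hGT
    have h43 := congrArg (PowerSeries.coeff (R := ℤ) a)
      (show (4 : PowerSeries ℤ) * PowerSeries.X^3
          = 2 * PowerSeries.X^3 + 2 * PowerSeries.X^3 by ring)
    rw [map_add] at h43
    rw [key]
    rw [h43] at hGT
    linarith [hGT]
  refine ⟨h1, ?_⟩
  have h2 := congrArg (PowerSeries.rescale (-1 : ℤ)) h1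
  simp only [map_mul, map_pow, map_sub, map_add, map_one, map_ofNat, PowerSeries.rescale_X,
    map_neg] at h2
  linear_combination h2
end
end

section
/- (MacMahon's formula) The generating function for plane partitions satisfies ∑_{n=0}^∞ pp(n) q^n = ∏_{m=1}^∞ (1 − q^m)^{−m} in ℤ⟦q⟧, where pp(n) denotes the number of plane partitions of n. -/
open PowerSeries Finset

noncomputable section

/-- Convergence (in the formal, i.e. coefficientwise, topology of `R⟦q⟧`) of the
infinite product of the family `f` to the power series `F`. -/
def HasPSProd {ι : Type} {R : Type} [CommRing R] (f : ι → PowerSeries R)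
    (F : PowerSeries R) : Prop :=
  ∀ n : ℕ, ∃ s₀ : Finset ι, ∀ s : Finset ι, s₀ ⊆ s →
    (PowerSeries.coeff (R := R) n) (∏ i ∈ s, f i) = (PowerSeries.coeff (R := R) n) F

/-- `M = M(q) = ∏_{m=1}^∞ (1 - q^m)^{-m}`, the MacMahon function in `ℤ⟦q⟧`
(`m ≥ 1` is encoded as `m + 1` for `m : ℕ`). -/
def IsMacMahon (M : PowerSeries ℤ) : Prop :=
  HasPSProd
    (fun m : ℕ => Ring.inverse ((1 - (PowerSeries.X : PowerSeries ℤ) ^ (m + 1)) ^ (m + 1))) M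

/-- `pp n`: the number of plane partitions of `n`, i.e. of finite lower sets in `ℕ³`
(with the componentwise order) of cardinality `n`. -/
def pp (n : ℕ) : ℕ :=
  Nat.card {π : Finset (ℕ × ℕ × ℕ) // IsLowerSet (π : Set (ℕ × ℕ × ℕ)) ∧ π.card = n}

namespace MacMahonAux

@[ext]
structure PP where
  f : ℕ → ℕ → ℕ
  dec_i : ∀ i j, f (i + 1) j ≤ f i j
  dec_j : ∀ i j, f i (j + 1) ≤ f i j
  fin : ∃ N, f N 0 = 0 ∧ f 0 N = 0

namespace PP

variable (π : PP)

lemma mono_i {i i' : ℕ} (h : i ≤ i') (j : ℕ) : π.f i' j ≤ π.f i j :=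
  antitone_nat_of_succ_le (f := fun n => π.f n j) (fun n => π.dec_i n j) h

lemma mono_j (i : ℕ) {j j' : ℕ} (h : j ≤ j') : π.f i j' ≤ π.f i j :=
  antitone_nat_of_succ_le (f := fun n => π.f i n) (fun n => π.dec_j i n) h

def bound : ℕ := Nat.find π.fin

lemma vanish {i j : ℕ} (h : π.bound ≤ i ∨ π.bound ≤ j) : π.f i j = 0 := by
  have hsp := Nat.find_spec π.fin
  rcases h with h | h
  · exact Nat.le_zero.mp <| (π.mono_j i (Nat.zero_le j)).trans <| (π.mono_i h 0).trans hsp.1.le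
  · exact Nat.le_zero.mp <| (π.mono_i (Nat.zero_le i) j).trans <| (π.mono_j 0 h).trans hsp.2.le

lemma f_eq_zero_of_zero (h : π.f 0 0 = 0) (i j : ℕ) : π.f i j = 0 :=
  Nat.le_zero.mp <| ((π.mono_j i (Nat.zero_le j)).trans (π.mono_i (Nat.zero_le i) 0)).trans h.le

def zero : PP := ⟨fun _ _ => 0, fun _ _ => le_rfl, fun _ _ => le_rfl, ⟨0, rfl, rfl⟩⟩

lemma eq_zero_iff : π = zero ↔ π.f 0 0 = 0 := by
  constructor
  · intro h; rw [h]; rfl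
  · intro h; ext i j; exact π.f_eq_zero_of_zero h i j

def sizeUpTo (N : ℕ) : ℕ := ∑ p ∈ range N ×ˢ range N, π.f p.1 p.2

def size : ℕ := π.sizeUpTo π.bound

lemma sizeUpTo_eq {N : ℕ} (hN : π.bound ≤ N) : π.sizeUpTo N = π.size := by
  unfold size sizeUpTo
  refine (Finset.sum_subset ?_ ?_).symm
  · intro p hp
    simp only [mem_product, mem_range] at hp ⊢
    omega
  · intro p hp hp'
    simp only [mem_product, mem_range] at hp hp'
    exact π.vanish (by omega)

/-! ### The extraction path -/

open scoped Classical in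
/-- The bottom row of the maximal constant segment of column `j` starting at row `r`. -/
def botRow (j r : ℕ) : ℕ :=
  if h : ∃ d, π.f (r + d + 1) j ≠ π.f r j then r + Nat.find h else r

lemma le_botRow (j r : ℕ) : r ≤ π.botRow j r := by
  unfold botRow; split <;> omega

lemma botRow_const (j r : ℕ) : ∀ i, r ≤ i → i ≤ π.botRow j r → π.f i j = π.f r j := by
  intro i h1 h2
  unfold botRow at h2
  split at h2
  · next h =>
    rcases Nat.exists_eq_add_of_le h1 with ⟨d, rfl⟩
    cases d with
    | zero => rfl
    | succ d' =>
      have hd : d' < Nat.find h := by omega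
      have := Nat.find_min h hd
      show π.f (r + d' + 1) j = π.f r j
      simpa using this
  · have : i = r := le_antisymm h2 h1
    rw [this]

lemma botRow_exists {j r : ℕ} (h0 : π.f r j ≠ 0) : ∃ d, π.f (r + d + 1) j ≠ π.f r j := by
  refine ⟨π.bound, ?_⟩
  rw [π.vanish (i := r + π.bound + 1) (Or.inl (by omega))]
  exact fun h => h0 h.symm

open scoped Classical in
lemma botRow_break {j r : ℕ} (h0 : π.f r j ≠ 0) :
    π.f (π.botRow j r + 1) j < π.f r j := by
  have hex := π.botRow_exists h0
  have hne : π.f (π.botRow j r + 1) j ≠ π.f r j := by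
    unfold botRow
    rw [dif_pos hex]
    exact Nat.find_spec hex
  have hle : π.f (π.botRow j r + 1) j ≤ π.f r j :=
    π.mono_i (by have := π.le_botRow j r; omega) j
  omega

open scoped Classical in
lemma botRow_ge_of_const {j r m : ℕ} (h0 : π.f r j ≠ 0) (hrm : r ≤ m)
    (hc : ∀ i, r ≤ i → i ≤ m → π.f i j = π.f r j) : m ≤ π.botRow j r := by
  unfold botRow
  rw [dif_pos (π.botRow_exists h0)]
  by_contra hlt
  push_neg at hlt
  have hfind : Nat.find (π.botRow_exists h0) < m - r := by omega
  have := Nat.find_spec (π.botRow_exists h0)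
  exact this (hc _ (by omega) (by omega))

lemma zrow_exists : ∃ j, π.f 0 j = 0 := ⟨π.bound, π.vanish (Or.inr le_rfl)⟩

open scoped Classical in
/-- One more than the rightmost nonzero column in row `0`. -/
def zrow : ℕ := Nat.find π.zrow_exists

/-- The rightmost nonzero column (start of the extraction path), for `π ≠ 0`. -/
def Bc : ℕ := π.zrow - 1

open scoped Classical in
lemma zrow_spec : π.f 0 π.zrow = 0 := Nat.find_spec π.zrow_exists

open scoped Classical in
lemma zrow_min {j : ℕ} (h : j < π.zrow) : π.f 0 j ≠ 0 := Nat.find_min π.zrow_exists h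

lemma zrow_pos (hπ : π.f 0 0 ≠ 0) : 0 < π.zrow := by
  rcases Nat.eq_zero_or_pos π.zrow with h | h
  · have := π.zrow_spec; rw [h] at this; exact absurd this hπ
  · exact h

lemma f0Bc (hπ : π.f 0 0 ≠ 0) : π.f 0 π.Bc ≠ 0 := by
  have h := π.zrow_pos hπ
  exact π.zrow_min (by unfold Bc; omega)

lemma fj_zero (hπ : π.f 0 0 ≠ 0) {j : ℕ} (h : π.Bc < j) : π.f 0 j = 0 := by
  have h1 := π.zrow_pos hπ
  have h2 : π.zrow ≤ j := by unfold Bc at h; omega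
  exact Nat.le_zero.mp ((π.mono_j 0 h2).trans π.zrow_spec.le)

/-- The extraction path: `eS k` is the bottom row of the path in column `Bc - k`. -/
def eS : ℕ → ℕ
  | 0 => π.botRow π.Bc 0
  | (k + 1) => π.botRow (π.Bc - (k + 1)) (eS k)

/-- `pe k` is the entry row of the path into column `Bc - k`. -/
def pe : ℕ → ℕ
  | 0 => 0
  | (k + 1) => π.eS k


lemma eS_def' (k : ℕ) : π.eS k = π.botRow (π.Bc - k) (π.pe k) := by
  cases k with
  | zero => simp [eS, pe]
  | succ k => simp [eS, pe]

lemma pe_le_eS (k : ℕ) : π.pe k ≤ π.eS k := by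
  rw [π.eS_def']; exact π.le_botRow _ _

lemma eS_mono : Monotone π.eS := by
  apply monotone_nat_of_le_succ
  intro k
  rw [π.eS_def' (k+1)]
  exact π.le_botRow _ _

lemma seg_const {k : ℕ} (i : ℕ) (h1 : π.pe k ≤ i) (h2 : i ≤ π.eS k) :
    π.f i (π.Bc - k) = π.f (π.pe k) (π.Bc - k) :=
  π.botRow_const _ _ i h1 (by rw [← π.eS_def']; exact h2)

lemma seg_nonzero (hπ : π.f 0 0 ≠ 0) : ∀ k, k ≤ π.Bc → π.f (π.pe k) (π.Bc - k) ≠ 0 := by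
  intro k
  induction k with
  | zero => intro _; simpa [pe] using π.f0Bc hπ
  | succ k ih =>
    intro hk
    have hk' : k ≤ π.Bc := by omega
    have h1 : π.f (π.eS k) (π.Bc - k) ≠ 0 := by
      rw [π.seg_const (π.eS k) (π.pe_le_eS k) le_rfl]
      exact ih hk'
    have hcol : π.Bc - k = (π.Bc - (k+1)) + 1 := by omega
    have : π.f (π.eS k) (π.Bc - k) ≤ π.f (π.eS k) (π.Bc - (k+1)) := by
      rw [hcol]; exact π.dec_j _ _
    have : π.f (π.pe (k+1)) (π.Bc - (k+1)) ≠ 0 := by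
      show π.f (π.eS k) _ ≠ 0
      omega
    exact this

lemma seg_break (hπ : π.f 0 0 ≠ 0) {k : ℕ} (hk : k ≤ π.Bc) :
    π.f (π.eS k + 1) (π.Bc - k) < π.f (π.pe k) (π.Bc - k) := by
  rw [π.eS_def']
  exact π.botRow_break (π.seg_nonzero hπ k hk)

/-- The ending row of the extraction path. -/
def Er : ℕ := π.eS π.Bc

/-- The recorded cell of one extraction step. -/
def recd : ℕ × ℕ := (π.Er, π.Bc)

def onPath (i j : ℕ) : Prop := j ≤ π.Bc ∧ π.pe (π.Bc - j) ≤ i ∧ i ≤ π.eS (π.Bc - j)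

instance (i j : ℕ) : Decidable (π.onPath i j) := by unfold onPath; infer_instance

lemma pe_sub {j : ℕ} (h : j < π.Bc) : π.pe (π.Bc - j) = π.eS (π.Bc - (j + 1)) := by
  have h2 : π.Bc - j = (π.Bc - (j+1)) + 1 := by omega
  rw [h2]; rfl

/-- `j`-indexed versions of the segment lemmas. -/
lemma seg_const' {i j : ℕ} (hj : j ≤ π.Bc) (h1 : π.pe (π.Bc - j) ≤ i)
    (h2 : i ≤ π.eS (π.Bc - j)) : π.f i j = π.f (π.pe (π.Bc - j)) j := by
  have hcol : π.Bc - (π.Bc - j) = j := by omega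
  have := π.seg_const (k := π.Bc - j) i h1 h2
  rwa [hcol] at this

lemma seg_break' (hπ : π.f 0 0 ≠ 0) {j : ℕ} (hj : j ≤ π.Bc) :
    π.f (π.eS (π.Bc - j) + 1) j < π.f (π.pe (π.Bc - j)) j := by
  have hcol : π.Bc - (π.Bc - j) = j := by omega
  have := π.seg_break hπ (k := π.Bc - j) (by omega)
  rwa [hcol] at this

lemma seg_nonzero' (hπ : π.f 0 0 ≠ 0) {j : ℕ} (hj : j ≤ π.Bc) :
    π.f (π.pe (π.Bc - j)) j ≠ 0 := by
  have hcol : π.Bc - (π.Bc - j) = j := by omega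
  have := π.seg_nonzero hπ (π.Bc - j) (by omega)
  rwa [hcol] at this

lemma f_pos_of_onPath (hπ : π.f 0 0 ≠ 0) {i j : ℕ} (h : π.onPath i j) : π.f i j ≠ 0 := by
  obtain ⟨hj, h1, h2⟩ := h
  rw [π.seg_const' hj h1 h2]
  exact π.seg_nonzero' hπ hj

/-- One step of the Hillman–Grassl-type extraction. -/
def extract (hπ : π.f 0 0 ≠ 0) : PP where
  f i j := π.f i j - (if π.onPath i j then 1 else 0)
  dec_i := by
    intro i j
    by_cases h1 : π.onPath (i+1) j <;> by_cases h2 : π.onPath i j <;>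
      simp only [h1, h2, if_pos, if_neg, if_true, if_false]
    · exact Nat.sub_le_sub_right (π.dec_i i j) 1
    · exact (Nat.sub_le _ _).trans (π.dec_i i j)
    · -- (i,j) on path, (i+1,j) not: i is the bottom of the segment
      obtain ⟨hj, ha, hb⟩ := h2
      have hi : i = π.eS (π.Bc - j) := by
        by_contra hne
        exact h1 ⟨hj, by omega, by omega⟩
      have := π.seg_break' hπ hj
      have hv : π.f i j = π.f (π.pe (π.Bc - j)) j := π.seg_const' hj ha hb
      rw [hi] at hv ⊢
      omega
    · exact (π.dec_i i j).trans (Nat.le_refl _)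
  dec_j := by
    intro i j
    by_cases h1 : π.onPath i (j+1) <;> by_cases h2 : π.onPath i j <;>
      simp only [h1, h2, if_pos, if_neg, if_true, if_false]
    · exact Nat.sub_le_sub_right (π.dec_j i j) 1
    · exact (Nat.sub_le _ _).trans (π.dec_j i j)
    · -- (i,j) on path, (i,j+1) not
      obtain ⟨hj, ha, hb⟩ := h2
      rcases eq_or_lt_of_le hj with hjB | hjB
      · -- j = Bc
        have hz : π.f 0 (j+1) = 0 := π.fj_zero hπ (by omega)
        have : π.f i (j+1) = 0 :=
          Nat.le_zero.mp ((π.mono_i (Nat.zero_le i) (j+1)).trans hz.le)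
        have hpos : π.f i j ≠ 0 := π.f_pos_of_onPath hπ ⟨hj, ha, hb⟩
        omega
      · -- j < Bc
        have hj1 : j + 1 ≤ π.Bc := hjB
        have hpe : π.pe (π.Bc - j) = π.eS (π.Bc - (j+1)) := π.pe_sub hjB
        have hgt : π.eS (π.Bc - (j+1)) < i := by
          by_contra hle
          push_neg at hle
          refine h1 ⟨hj1, ?_, hle⟩
          have h5 := π.pe_le_eS (π.Bc - (j+1))
          omega
        -- f i (j+1) < v' := f (pe (Bc-(j+1))) (j+1)
        have hbr := π.seg_break' hπ hj1
        have hlt : π.f i (j+1) < π.f (π.pe (π.Bc - (j+1))) (j+1) := by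
          have : π.f i (j+1) ≤ π.f (π.eS (π.Bc - (j+1)) + 1) (j+1) :=
            π.mono_i (by omega) (j+1)
          omega
        -- f i j = v ≥ v'
        have hv : π.f i j = π.f (π.pe (π.Bc - j)) j := π.seg_const' hj ha hb
        have hv2 : π.f (π.eS (π.Bc - (j+1))) (j+1) = π.f (π.pe (π.Bc - (j+1))) (j+1) :=
          π.seg_const' hj1 (π.pe_le_eS _) le_rfl
        have hv3 : π.f (π.eS (π.Bc - (j+1))) (j+1) ≤ π.f (π.eS (π.Bc - (j+1))) j :=
          π.dec_j _ _
        rw [hpe] at hv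
        omega
    · exact (π.dec_j i j).trans (Nat.le_refl _)
  fin := by
    refine ⟨π.bound, ?_, ?_⟩
    · show π.f π.bound 0 - _ = 0
      rw [π.vanish (i := π.bound) (j := 0) (Or.inl le_rfl)]
      simp
    · show π.f 0 π.bound - _ = 0
      rw [π.vanish (i := 0) (j := π.bound) (Or.inr le_rfl)]
      simp

lemma extract_f (hπ : π.f 0 0 ≠ 0) (i j : ℕ) :
    (π.extract hπ).f i j = π.f i j - (if π.onPath i j then 1 else 0) := rfl

lemma extract_add (hπ : π.f 0 0 ≠ 0) (i j : ℕ) :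
    (π.extract hπ).f i j + (if π.onPath i j then 1 else 0) = π.f i j := by
  rw [extract_f]
  by_cases h : π.onPath i j
  · have := π.f_pos_of_onPath hπ h
    simp only [h, if_true]
    omega
  · simp [h]


/-! ### Insertion -/

open scoped Classical in
/-- The top row of the maximal constant segment of column `j` ending at row `r`. -/
def topRow (j r : ℕ) : ℕ := Nat.find (⟨r, rfl⟩ : ∃ m, π.f m j = π.f r j)

open scoped Classical in
lemma topRow_le (j r : ℕ) : π.topRow j r ≤ r := Nat.find_le rfl

open scoped Classical in
lemma topRow_spec (j r : ℕ) : π.f (π.topRow j r) j = π.f r j :=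
  Nat.find_spec (⟨r, rfl⟩ : ∃ m, π.f m j = π.f r j)

open scoped Classical in
lemma topRow_min {j r m : ℕ} (h : π.f m j = π.f r j) : π.topRow j r ≤ m := Nat.find_le h

open scoped Classical in
lemma topRow_min' {j r m : ℕ} (h : m < π.topRow j r) : π.f m j ≠ π.f r j := by
  unfold topRow at h
  exact Nat.find_min (⟨r, rfl⟩ : ∃ m, π.f m j = π.f r j) h

lemma topRow_const (j r : ℕ) : ∀ i, π.topRow j r ≤ i → i ≤ r → π.f i j = π.f r j := by
  intro i h1 h2
  refine le_antisymm ?_ (π.mono_i h2 j)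
  calc π.f i j ≤ π.f (π.topRow j r) j := π.mono_i h1 j
    _ = π.f r j := π.topRow_spec j r

/-- The insertion path for the record `c = (E, B)`: `iS c j` is the bottom row of the
insertion path in column `j`. -/
def iS (c : ℕ × ℕ) : ℕ → ℕ
  | 0 => c.1
  | (j + 1) => π.topRow j (iS c j)

lemma iS_succ (c : ℕ × ℕ) (j : ℕ) : π.iS c (j + 1) = π.topRow j (π.iS c j) := rfl

lemma iS_anti (c : ℕ × ℕ) : Antitone (π.iS c) := by
  apply antitone_nat_of_succ_le
  intro j
  exact π.topRow_le j (π.iS c j)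

lemma iS_const (c : ℕ × ℕ) {i j : ℕ} (h1 : π.iS c (j + 1) ≤ i) (h2 : i ≤ π.iS c j) :
    π.f i j = π.f (π.iS c j) j :=
  π.topRow_const j (π.iS c j) i h1 h2

def insPath (c : ℕ × ℕ) (i j : ℕ) : Prop :=
  j ≤ c.2 ∧ π.iS c (j + 1) ≤ i ∧ i ≤ π.iS c j

instance (c : ℕ × ℕ) (i j : ℕ) : Decidable (π.insPath c i j) := by
  unfold insPath; infer_instance

/-- Insertion of one hook recorded by `c` into a plane partition. -/
def ins (c : ℕ × ℕ) : PP where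
  f i j := π.f i j + (if π.insPath c i j then 1 else 0)
  dec_i := by
    intro i j
    by_cases h1 : π.insPath c (i+1) j <;> by_cases h2 : π.insPath c i j <;>
      simp only [h1, h2, if_true, if_false]
    · exact Nat.add_le_add_right (π.dec_i i j) 1
    · -- (i+1) on path, i not: i + 1 is the top of the segment
      obtain ⟨hj, ha, hb⟩ := h1
      have hi : i + 1 = π.iS c (j+1) := by
        by_contra hne
        exact h2 ⟨hj, by omega, by omega⟩
      have hlt : i < π.topRow j (π.iS c j) := by rw [← π.iS_succ]; omega
      have hne := π.topRow_min' hlt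
      have heq : π.f (i+1) j = π.f (π.iS c j) j := π.iS_const c (by omega) hb
      have := π.dec_i i j
      omega
    · have := π.dec_i i j
      omega
    · exact Nat.add_le_add_right (π.dec_i i j) 0 |>.trans (by omega)
  dec_j := by
    intro i j
    by_cases h1 : π.insPath c i (j+1) <;> by_cases h2 : π.insPath c i j <;>
      simp only [h1, h2, if_true, if_false]
    · exact Nat.add_le_add_right (π.dec_j i j) 1
    · -- (i, j+1) on path, (i,j) not
      obtain ⟨hj1, ha, hb⟩ := h1
      have hij : i < π.iS c (j+1) := by
        by_contra hle
        push_neg at hle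
        refine h2 ⟨by omega, hle, ?_⟩
        exact hb.trans (π.iS_anti c (by omega))
      by_contra hcon
      push_neg at hcon
      have hmono := π.dec_j i j
      have hv : π.f i j = π.f i (j+1) := by omega
      -- derive contradiction
      have e1 : π.f i (j+1) = π.f (π.iS c (j+1)) (j+1) := π.iS_const c ha hb
      have e2 : π.f (π.iS c (j+1)) j ≤ π.f i j := π.mono_i (by omega) j
      have e3 : π.f (π.iS c (j+1)) (j+1) ≤ π.f (π.iS c (j+1)) j := π.dec_j _ _
      have e4 : π.f (π.iS c (j+1)) j = π.f (π.iS c j) j := π.topRow_spec j (π.iS c j)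
      have e5 : π.f i j = π.f (π.iS c j) j := by omega
      have := π.topRow_min (r := π.iS c j) (m := i) (j := j) e5
      rw [← π.iS_succ] at this
      omega
    · have := π.dec_j i j
      omega
    · have := π.dec_j i j
      omega
  fin := by
    refine ⟨max π.bound (max (c.1 + 1) (c.2 + 1)), ?_, ?_⟩
    · have h1 : π.f (max π.bound (max (c.1 + 1) (c.2 + 1))) 0 = 0 :=
        π.vanish (Or.inl (le_max_left _ _))
      have h2 : ¬ π.insPath c (max π.bound (max (c.1 + 1) (c.2 + 1))) 0 := by
        rintro ⟨-, -, hb⟩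
        have : π.iS c 0 = c.1 := rfl
        have := π.iS_anti c (Nat.zero_le 0)
        omega
      show π.f _ _ + _ = 0
      rw [h1, if_neg h2]
    · have h1 : π.f 0 (max π.bound (max (c.1 + 1) (c.2 + 1))) = 0 :=
        π.vanish (Or.inr (le_max_left _ _))
      have h2 : ¬ π.insPath c 0 (max π.bound (max (c.1 + 1) (c.2 + 1))) := by
        rintro ⟨hj, -, -⟩
        omega
      show π.f _ _ + _ = 0
      rw [h1, if_neg h2]

lemma ins_f (c : ℕ × ℕ) (i j : ℕ) :
    (π.ins c).f i j = π.f i j + (if π.insPath c i j then 1 else 0) := rfl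


/-! ### Validity of insertion and the first round trip -/

/-- The compatibility condition for inserting record `c` into `π`. -/
def Cond (c : ℕ × ℕ) : Prop :=
  π.f 0 0 = 0 ∨ π.Bc < c.2 ∨ (c.2 = π.Bc ∧ c.1 ≤ π.Er)

lemma col_zero {j : ℕ} (h : π.f 0 j = 0) (i : ℕ) : π.f i j = 0 :=
  Nat.le_zero.mp ((π.mono_i (Nat.zero_le i) j).trans h.le)

lemma topRow_zero_of_col_zero {j : ℕ} (h : π.f 0 j = 0) (r : ℕ) : π.topRow j r = 0 :=
  Nat.le_zero.mp (π.topRow_min (by rw [π.col_zero h 0, π.col_zero h r]))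

lemma iS_le_eS {c : ℕ × ℕ} (hB : c.2 = π.Bc) (hE : c.1 ≤ π.Er) :
    ∀ j, j ≤ π.Bc → π.iS c j ≤ π.eS (π.Bc - j) := by
  intro j
  induction j with
  | zero =>
    intro _
    show c.1 ≤ _
    simpa [Er] using hE
  | succ j ih =>
    intro hj
    have hj' : j ≤ π.Bc := by omega
    have ihj := ih hj'
    have hpe : π.pe (π.Bc - j) = π.eS (π.Bc - (j + 1)) := π.pe_sub (by omega)
    by_cases hlt : π.iS c j < π.pe (π.Bc - j)
    · have := π.topRow_le j (π.iS c j)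
      rw [π.iS_succ]
      omega
    · push_neg at hlt
      have hcst : π.f (π.iS c j) j = π.f (π.pe (π.Bc - j)) j :=
        π.seg_const' hj' hlt ihj
      have := π.topRow_min (r := π.iS c j) (m := π.pe (π.Bc - j)) (j := j) hcst.symm
      rw [π.iS_succ]
      omega

lemma ins_valid {c : ℕ × ℕ} (hC : π.Cond c) : π.iS c (c.2 + 1) = 0 := by
  by_cases h0 : π.f 0 0 = 0
  · rw [π.iS_succ]
    exact π.topRow_zero_of_col_zero (π.f_eq_zero_of_zero h0 0 c.2) _
  · rcases hC with h | hlt | ⟨hB, hE⟩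
    · exact absurd h h0
    · rw [π.iS_succ]
      exact π.topRow_zero_of_col_zero (π.fj_zero h0 hlt) _
    · have hle := π.iS_le_eS hB hE c.2 (by omega)
      rw [π.iS_succ]
      have h1 : π.Bc - c.2 = 0 := by omega
      rw [h1] at hle
      have hb2 : π.iS c c.2 ≤ π.eS (π.Bc - c.2) := by rw [h1]; exact hle
      have h2 := π.seg_const' (j := c.2) (i := π.iS c c.2) (le_of_eq hB)
        (by rw [h1]; exact Nat.zero_le _) hb2
      rw [h1] at h2
      simp only [pe] at h2
      exact Nat.le_zero.mp (π.topRow_min h2.symm)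

lemma ins_f00 {c : ℕ × ℕ} (hC : π.Cond c) : (π.ins c).f 0 0 ≠ 0 := by
  rw [π.ins_f]
  by_cases h0 : π.f 0 0 = 0
  · have hp : π.insPath c 0 0 := by
      refine ⟨Nat.zero_le _, ?_, Nat.zero_le _⟩
      rcases Nat.eq_zero_or_pos c.2 with h | h
      · rw [show (0:ℕ) + 1 = c.2 + 1 by omega, π.ins_valid hC]
      · rw [π.iS_succ]
        rw [π.topRow_zero_of_col_zero (π.f_eq_zero_of_zero h0 0 0) _]
    rw [if_pos hp]
    omega
  · omega

lemma ins_f0_pos {c : ℕ × ℕ} (hC : π.Cond c) {j : ℕ} (hj : j ≤ c.2) :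
    (π.ins c).f 0 j ≠ 0 := by
  rw [π.ins_f]
  by_cases h0 : π.f 0 j = 0
  · have hp : π.insPath c 0 j := by
      refine ⟨hj, ?_, Nat.zero_le _⟩
      rcases eq_or_lt_of_le hj with he | hlt
      · rw [he, π.ins_valid hC]
      · rw [π.iS_succ]
        exact (π.topRow_zero_of_col_zero h0 _).le
    rw [if_pos hp]
    omega
  · omega

lemma ins_f0_zero {c : ℕ × ℕ} (hC : π.Cond c) : (π.ins c).f 0 (c.2 + 1) = 0 := by
  rw [π.ins_f, if_neg (by rintro ⟨hj, -, -⟩; omega)]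
  by_cases h0 : π.f 0 0 = 0
  · exact π.f_eq_zero_of_zero h0 0 (c.2+1)
  · rcases hC with h | hlt | ⟨hB, hE⟩
    · exact absurd h h0
    · exact π.fj_zero h0 (by omega)
    · exact π.fj_zero h0 (by omega)

lemma ins_Bc {c : ℕ × ℕ} (hC : π.Cond c) : (π.ins c).Bc = c.2 := by
  have h1 : (π.ins c).zrow = c.2 + 1 := by
    refine le_antisymm ?_ ?_
    · exact Nat.find_le (π.ins_f0_zero hC)
    · by_contra hlt
      push_neg at hlt
      exact π.ins_f0_pos hC (by omega) ((π.ins c).zrow_spec)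
  unfold Bc
  omega

open scoped Classical in
lemma botRow_le_of_break {j r m : ℕ} (hrm : r ≤ m) (hbr : π.f (m+1) j ≠ π.f r j) :
    π.botRow j r ≤ m := by
  have hex : ∃ d, π.f (r + d + 1) j ≠ π.f r j := ⟨m - r, by
    have : r + (m - r) + 1 = m + 1 := by omega
    rw [this]; exact hbr⟩
  unfold botRow
  rw [dif_pos hex]
  have : Nat.find hex ≤ m - r := Nat.find_le (by
    have : r + (m - r) + 1 = m + 1 := by omega
    rw [this]; exact hbr)
  omega

lemma ins_onseg {c : ℕ × ℕ} {i j : ℕ} (hj : j ≤ c.2) (h1 : π.iS c (j+1) ≤ i)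
    (h2 : i ≤ π.iS c j) : (π.ins c).f i j = π.f (π.iS c j) j + 1 := by
  rw [π.ins_f, if_pos ⟨hj, h1, h2⟩, π.iS_const c h1 h2]

lemma ins_botRow {c : ℕ × ℕ} {j : ℕ} (hj : j ≤ c.2) :
    (π.ins c).botRow j (π.iS c (j+1)) = π.iS c j := by
  have hmono : π.iS c (j+1) ≤ π.iS c j := π.iS_anti c (by omega)
  refine le_antisymm ?_ ?_
  · refine (π.ins c).botRow_le_of_break hmono ?_
    have hoff : (π.ins c).f (π.iS c j + 1) j = π.f (π.iS c j + 1) j := by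
      rw [π.ins_f, if_neg (by rintro ⟨-, -, hb⟩; omega), Nat.add_zero]
    have hon : (π.ins c).f (π.iS c (j+1)) j = π.f (π.iS c j) j + 1 :=
      π.ins_onseg hj le_rfl hmono
    have := π.mono_i (show π.iS c j ≤ π.iS c j + 1 by omega) j
    omega
  · refine (π.ins c).botRow_ge_of_const ?_ hmono ?_
    · rw [π.ins_onseg hj le_rfl hmono]
      omega
    · intro i hi1 hi2
      rw [π.ins_onseg hj hi1 hi2, π.ins_onseg hj le_rfl hmono]

lemma ins_eS {c : ℕ × ℕ} (hC : π.Cond c) : ∀ k, k ≤ c.2 → (π.ins c).eS k = π.iS c (c.2 - k) := by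
  intro k
  induction k with
  | zero =>
    intro _
    show (π.ins c).botRow (π.ins c).Bc 0 = π.iS c (c.2 - 0)
    rw [Nat.sub_zero, π.ins_Bc hC, ← π.ins_valid hC]
    exact π.ins_botRow le_rfl
  | succ k ih =>
    intro hk
    show (π.ins c).botRow ((π.ins c).Bc - (k+1)) ((π.ins c).eS k) = _
    rw [π.ins_Bc hC, ih (by omega)]
    have hj : c.2 - k = (c.2 - (k+1)) + 1 := by omega
    rw [hj]
    exact π.ins_botRow (by omega)

lemma ins_onPath {c : ℕ × ℕ} (hC : π.Cond c) (i j : ℕ) :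
    (π.ins c).onPath i j ↔ π.insPath c i j := by
  unfold onPath insPath
  rw [π.ins_Bc hC]
  constructor
  · rintro ⟨hj, h1, h2⟩
    refine ⟨hj, ?_, ?_⟩
    · rcases eq_or_lt_of_le hj with he | hlt
      · rw [he, π.ins_valid hC]; omega
      · have hpe : (π.ins c).pe (c.2 - j) = (π.ins c).eS (c.2 - (j+1)) := by
          have h2' : c.2 - j = (c.2 - (j+1)) + 1 := by omega
          rw [h2']; rfl
        rw [hpe, π.ins_eS hC _ (by omega)] at h1
        have : c.2 - (c.2 - (j+1)) = j + 1 := by omega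
        rwa [this] at h1
    · rw [π.ins_eS hC _ (by omega)] at h2
      have : c.2 - (c.2 - j) = j := by omega
      rwa [this] at h2
  · rintro ⟨hj, h1, h2⟩
    refine ⟨hj, ?_, ?_⟩
    · rcases eq_or_lt_of_le hj with he | hlt
      · have : c.2 - j = 0 := by omega
        rw [this]
        show (π.ins c).pe 0 ≤ i
        simp [pe]
      · have hpe : (π.ins c).pe (c.2 - j) = (π.ins c).eS (c.2 - (j+1)) := by
          have h2' : c.2 - j = (c.2 - (j+1)) + 1 := by omega
          rw [h2']; rfl
        rw [hpe, π.ins_eS hC _ (by omega)]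
        have heq : c.2 - (c.2 - (j+1)) = j + 1 := by omega
        rwa [heq]
    · rw [π.ins_eS hC _ (by omega)]
      have heq : c.2 - (c.2 - j) = j := by omega
      rwa [heq]

lemma ins_recd {c : ℕ × ℕ} (hC : π.Cond c) : (π.ins c).recd = c := by
  unfold recd Er
  rw [π.ins_Bc hC, π.ins_eS hC c.2 le_rfl]
  simp [iS]

lemma extract_ins {c : ℕ × ℕ} (hC : π.Cond c) :
    (π.ins c).extract (π.ins_f00 hC) = π := by
  ext i j
  rw [extract_f, π.ins_f]
  by_cases hp : π.insPath c i j
  · rw [if_pos hp, if_pos ((π.ins_onPath hC i j).mpr hp)]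
    omega
  · rw [if_neg hp, if_neg (fun h => hp ((π.ins_onPath hC i j).mp h))]
    omega


/-! ### The second round trip and the ordering lemma -/

lemma extract_topRow (hπ : π.f 0 0 ≠ 0) {j : ℕ} (hj : j ≤ π.Bc) :
    (π.extract hπ).topRow j (π.eS (π.Bc - j)) = π.pe (π.Bc - j) := by
  set ρ := π.extract hπ with hρ
  have hpe := π.pe_le_eS (π.Bc - j)
  have hv : π.f (π.pe (π.Bc - j)) j ≠ 0 := π.seg_nonzero' hπ hj
  have hes : ρ.f (π.eS (π.Bc - j)) j = π.f (π.pe (π.Bc - j)) j - 1 := by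
    rw [hρ, extract_f, if_pos ⟨hj, hpe, le_rfl⟩, π.seg_const' hj hpe le_rfl]
  have hpe' : ρ.f (π.pe (π.Bc - j)) j = π.f (π.pe (π.Bc - j)) j - 1 := by
    rw [hρ, extract_f, if_pos ⟨hj, le_rfl, hpe⟩]
  refine le_antisymm (ρ.topRow_min (by rw [hes, hpe'])) ?_
  by_contra hlt
  push_neg at hlt
  have hspec := ρ.topRow_spec j (π.eS (π.Bc - j))
  set m := ρ.topRow j (π.eS (π.Bc - j)) with hm
  have hmoff : ρ.f m j = π.f m j := by
    rw [hρ, extract_f, if_neg (by rintro ⟨-, h1, -⟩; omega)]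
    omega
  have : π.f (π.pe (π.Bc - j)) j ≤ π.f m j := π.mono_i (by omega) j
  omega

lemma extract_iS (hπ : π.f 0 0 ≠ 0) :
    ∀ j, j ≤ π.Bc → (π.extract hπ).iS π.recd j = π.eS (π.Bc - j) := by
  intro j
  induction j with
  | zero =>
    intro _
    show π.recd.1 = π.eS (π.Bc - 0)
    rw [Nat.sub_zero]
    rfl
  | succ j ih =>
    intro hj
    rw [iS_succ, ih (by omega), π.extract_topRow hπ (by omega), π.pe_sub (by omega)]

lemma extract_iS_top (hπ : π.f 0 0 ≠ 0) :
    (π.extract hπ).iS π.recd (π.Bc + 1) = 0 := by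
  rw [iS_succ, π.extract_iS hπ π.Bc le_rfl, π.extract_topRow hπ le_rfl]
  have : π.Bc - π.Bc = 0 := by omega
  rw [this]
  rfl

lemma extract_insPath (hπ : π.f 0 0 ≠ 0) (i j : ℕ) :
    (π.extract hπ).insPath π.recd i j ↔ π.onPath i j := by
  unfold insPath onPath
  have hrecd : π.recd.2 = π.Bc := rfl
  rw [hrecd]
  constructor
  · rintro ⟨hj, h1, h2⟩
    refine ⟨hj, ?_, ?_⟩
    · rcases eq_or_lt_of_le hj with he | hlt
      · have h0 : π.Bc - j = 0 := by omega
        rw [h0]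
        show π.pe 0 ≤ i
        simp [pe]
      · rw [π.extract_iS hπ (j+1) (by omega)] at h1
        rwa [π.pe_sub hlt]
    · rwa [π.extract_iS hπ j hj] at h2
  · rintro ⟨hj, h1, h2⟩
    refine ⟨hj, ?_, ?_⟩
    · rcases eq_or_lt_of_le hj with he | hlt
      · rw [he, π.extract_iS_top hπ]
        omega
      · rw [π.extract_iS hπ (j+1) (by omega), ← π.pe_sub hlt]
        exact h1
    · rwa [π.extract_iS hπ j hj]

lemma ins_extract (hπ : π.f 0 0 ≠ 0) : (π.extract hπ).ins π.recd = π := by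
  ext i j
  rw [ins_f]
  by_cases hp : π.onPath i j
  · rw [if_pos ((π.extract_insPath hπ i j).mpr hp)]
    have := π.extract_add hπ i j
    rw [if_pos hp] at this
    exact this
  · rw [if_neg (fun h => hp ((π.extract_insPath hπ i j).mp h))]
    rw [extract_f, if_neg hp]
    omega

lemma extract_Bc_le (hπ : π.f 0 0 ≠ 0) : (π.extract hπ).Bc ≤ π.Bc := by
  have hz : (π.extract hπ).f 0 (π.Bc + 1) = 0 := by
    rw [extract_f]
    have := π.fj_zero hπ (show π.Bc < π.Bc + 1 by omega)
    omega
  have : (π.extract hπ).zrow ≤ π.Bc + 1 := Nat.find_le hz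
  have h3 := π.zrow_pos hπ
  have hBc : π.Bc = π.zrow - 1 := rfl
  unfold Bc
  omega

lemma extract_eS_ge (hπ : π.f 0 0 ≠ 0) (h2 : (π.extract hπ).f 0 0 ≠ 0)
    (hBeq : (π.extract hπ).Bc = π.Bc) :
    ∀ k, k ≤ π.Bc → π.eS k ≤ (π.extract hπ).eS k := by
  set ρ := π.extract hπ with hρdef
  intro k
  induction k with
  | zero =>
    intro _
    show π.eS 0 ≤ ρ.botRow ρ.Bc 0
    rw [hBeq]
    refine ρ.botRow_ge_of_const ?_ (Nat.zero_le _) ?_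
    · have := ρ.f0Bc h2
      rwa [hBeq] at this
    · intro i _ hi2
      have hBB : π.Bc - π.Bc = 0 := by omega
      have hon : ∀ i', i' ≤ π.eS 0 → π.onPath i' π.Bc := by
        intro i' hi'
        refine ⟨le_rfl, ?_, ?_⟩
        · rw [hBB]; exact Nat.zero_le _
        · rwa [hBB]
      have e1 : ρ.f i π.Bc = π.f i π.Bc - 1 := by
        rw [hρdef, extract_f, if_pos (hon i hi2)]
      have e2 : ρ.f 0 π.Bc = π.f 0 π.Bc - 1 := by
        rw [hρdef, extract_f, if_pos (hon 0 (Nat.zero_le _))]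
      have e3 : π.f i π.Bc = π.f (π.pe (π.Bc - π.Bc)) π.Bc := by
        rw [π.seg_const' le_rfl ?_ ?_]
        · rw [hBB]; exact Nat.zero_le _
        · rwa [hBB]
      have e4 : π.f 0 π.Bc = π.f (π.pe (π.Bc - π.Bc)) π.Bc := by
        rw [π.seg_const' le_rfl ?_ ?_]
        · rw [hBB]; exact Nat.zero_le _
        · rw [hBB]; exact Nat.zero_le _
      omega
  | succ k ih =>
    intro hk
    have ihk := ih (by omega)
    show π.eS (k+1) ≤ ρ.botRow (ρ.Bc - (k+1)) (ρ.eS k)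
    rw [hBeq]
    by_cases hcase : π.eS (k+1) ≤ ρ.eS k
    · exact hcase.trans (ρ.le_botRow _ _)
    · push_neg at hcase
      refine ρ.botRow_ge_of_const ?_ (by omega) ?_
      · have := ρ.seg_nonzero h2 (k+1) (by omega)
        have hpe : ρ.pe (k+1) = ρ.eS k := rfl
        rwa [hpe, hBeq] at this
      · intro i hi1 hi2
        have honi : ∀ i', π.eS k ≤ i' → i' ≤ π.eS (k+1) → π.onPath i' (π.Bc - (k+1)) := by
          intro i' h1 h2'
          have hsub : π.Bc - (π.Bc - (k+1)) = k + 1 := by omega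
          refine ⟨by omega, ?_, ?_⟩
          · rw [hsub]; exact h1
          · rw [hsub]; exact h2'
        have key : ∀ i', π.eS k ≤ i' → i' ≤ π.eS (k+1) →
            ρ.f i' (π.Bc - (k+1)) = π.f (π.pe (k+1)) (π.Bc - (k+1)) - 1 := by
          intro i' h1 h2'
          rw [hρdef, extract_f, if_pos (honi i' h1 h2')]
          congr 1
          have hsub : π.Bc - (π.Bc - (k+1)) = k + 1 := by omega
          have := π.seg_const' (j := π.Bc - (k+1)) (i := i') (by omega) ?_ ?_
          · rwa [hsub] at this
          · rw [hsub]; exact h1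
          · rw [hsub]; exact h2'
        rw [key i (by omega) hi2, key (ρ.eS k) (by omega) (by omega)]

def recLE (c d : ℕ × ℕ) : Prop := d.2 < c.2 ∨ (c.2 = d.2 ∧ c.1 ≤ d.1)

lemma recLE_refl (c : ℕ × ℕ) : recLE c c := Or.inr ⟨rfl, le_rfl⟩

lemma recLE_trans {a b c : ℕ × ℕ} (h1 : recLE a b) (h2 : recLE b c) : recLE a c := by
  unfold recLE at *
  omega

lemma recLE_antisymm {a b : ℕ × ℕ} (h1 : recLE a b) (h2 : recLE b a) : a = b := by
  unfold recLE at *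
  have : a.1 = b.1 ∧ a.2 = b.2 := by omega
  exact Prod.ext this.1 this.2

lemma Cond_iff_recLE {c : ℕ × ℕ} (hπ : π.f 0 0 ≠ 0) : π.Cond c ↔ recLE c π.recd := by
  unfold Cond recLE recd
  simp only [hπ, false_or]

lemma extract_cond (hπ : π.f 0 0 ≠ 0) : (π.extract hπ).Cond π.recd := by
  set ρ := π.extract hπ with hρdef
  by_cases h2 : ρ.f 0 0 = 0
  · exact Or.inl h2
  · have hle := π.extract_Bc_le hπ
    rcases lt_or_eq_of_le hle with hlt | heq
    · exact Or.inr (Or.inl hlt)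
    · refine Or.inr (Or.inr ⟨heq.symm, ?_⟩)
      show π.eS π.Bc ≤ ρ.Er
      unfold Er
      rw [heq]
      exact π.extract_eS_ge hπ h2 heq π.Bc le_rfl

lemma extract_recLE (hπ : π.f 0 0 ≠ 0) (h2 : (π.extract hπ).f 0 0 ≠ 0) :
    recLE π.recd (π.extract hπ).recd :=
  ((π.extract hπ).Cond_iff_recLE h2).mp (π.extract_cond hπ)


/-! ### Size bookkeeping -/

lemma tele_sum (g : ℕ → ℕ) (hg : ∀ t, g (t+1) ≤ g t) :
    ∀ n, ∑ j ∈ range n, (g j + 1 - g (j+1)) = n + g 0 - g n := by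
  intro n
  induction n with
  | zero => simp
  | succ n ih =>
    rw [Finset.sum_range_succ, ih]
    have h1 : g n ≤ g 0 := antitone_nat_of_succ_le hg (Nat.zero_le n)
    have h2 := hg n
    omega

lemma row_count {c : ℕ × ℕ} {j N : ℕ} (hj : j ≤ c.2) (hN : c.1 < N) :
    ∑ i ∈ range N, (if π.insPath c i j then 1 else 0) =
      π.iS c j + 1 - π.iS c (j + 1) := by
  have hiS : π.iS c j < N := lt_of_le_of_lt (π.iS_anti c (Nat.zero_le j)) hN
  have hstep : ∀ i : ℕ, (if π.insPath c i j then 1 else 0) =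
      (if i ∈ Finset.Icc (π.iS c (j+1)) (π.iS c j) then 1 else 0) := by
    intro i
    by_cases h : π.insPath c i j
    · rw [if_pos h, if_pos (by obtain ⟨-, h1, h2⟩ := h; exact Finset.mem_Icc.mpr ⟨h1, h2⟩)]
    · rw [if_neg h, if_neg (by
        intro hm
        obtain ⟨h1, h2⟩ := Finset.mem_Icc.mp hm
        exact h ⟨hj, h1, h2⟩)]
  rw [Finset.sum_congr rfl (fun i _ => hstep i)]
  rw [Finset.sum_ite_mem]
  have hinter : Finset.Icc (π.iS c (j+1)) (π.iS c j) ⊆ range N := by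
    intro x hx
    rw [Finset.mem_Icc] at hx
    rw [Finset.mem_range]
    omega
  rw [Finset.inter_eq_right.mpr hinter]
  simp [Nat.card_Icc]

lemma ins_path_count {c : ℕ × ℕ} (hC : π.Cond c) {N : ℕ} (hN1 : c.1 < N) (hN2 : c.2 < N) :
    ∑ p ∈ range N ×ˢ range N, (if π.insPath c p.1 p.2 then 1 else 0) = c.1 + c.2 + 1 := by
  rw [Finset.sum_product_right]
  have hinner : ∀ j ∈ range N, ∑ i ∈ range N, (if π.insPath c i j then 1 else 0) =
      (if j ≤ c.2 then π.iS c j + 1 - π.iS c (j+1) else 0) := by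
    intro j _
    by_cases hj : j ≤ c.2
    · rw [if_pos hj, π.row_count hj hN1]
    · rw [if_neg hj]
      apply Finset.sum_eq_zero
      intro i _
      rw [if_neg (by rintro ⟨h1, -, -⟩; omega)]
  rw [Finset.sum_congr rfl hinner]
  have hsub : ∑ j ∈ range N, (if j ≤ c.2 then π.iS c j + 1 - π.iS c (j+1) else 0) =
      ∑ j ∈ range (c.2 + 1), (π.iS c j + 1 - π.iS c (j+1)) := by
    rw [← Finset.sum_subset (Finset.range_subset_range.mpr (show c.2 + 1 ≤ N by omega))]
    · apply Finset.sum_congr rfl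
      intro j hj
      rw [Finset.mem_range] at hj
      rw [if_pos (by omega)]
    · intro j _ hj
      rw [Finset.mem_range] at hj
      rw [if_neg (by omega)]
  rw [hsub, tele_sum (π.iS c) (fun t => π.topRow_le t _), π.ins_valid hC]
  show c.2 + 1 + π.iS c 0 - 0 = _
  show c.2 + 1 + c.1 - 0 = _
  omega

lemma ins_size {c : ℕ × ℕ} (hC : π.Cond c) :
    (π.ins c).size = π.size + (c.1 + c.2 + 1) := by
  set N := max (max (π.ins c).bound π.bound) (max (c.1 + 1) (c.2 + 1)) with hN
  have h1 : (π.ins c).size = (π.ins c).sizeUpTo N := ((π.ins c).sizeUpTo_eq (by omega)).symm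
  have h2 : π.size = π.sizeUpTo N := (π.sizeUpTo_eq (by omega)).symm
  rw [h1, h2]
  unfold sizeUpTo
  have : ∀ p ∈ range N ×ˢ range N, (π.ins c).f p.1 p.2 =
      π.f p.1 p.2 + (if π.insPath c p.1 p.2 then 1 else 0) := fun p _ => rfl
  rw [Finset.sum_congr rfl this, Finset.sum_add_distrib,
    π.ins_path_count hC (by omega) (by omega)]

lemma extract_size (hπ : π.f 0 0 ≠ 0) :
    π.size = (π.extract hπ).size + (π.recd.1 + π.recd.2 + 1) := by
  conv_lhs => rw [← π.ins_extract hπ]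
  exact (π.extract hπ).ins_size (π.extract_cond hπ)

lemma extract_size_lt (hπ : π.f 0 0 ≠ 0) : (π.extract hπ).size < π.size := by
  have := π.extract_size hπ
  omega

lemma size_zero_of (h : π.f 0 0 = 0) : π.size = 0 := by
  unfold size sizeUpTo
  apply Finset.sum_eq_zero
  intro p _
  exact π.f_eq_zero_of_zero h p.1 p.2


end PP

/-! ### The weight of a filling, and the Hillman–Grassl bijection -/

/-- The weight of a filling `a : ℕ × ℕ →₀ ℕ`: each cell `(i,j)` has hook weight `i+j+1`. -/
def wt (a : (ℕ × ℕ) →₀ ℕ) : ℕ := a.sum fun p v => (p.1 + p.2 + 1) * v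

lemma wt_add (a b : (ℕ × ℕ) →₀ ℕ) : wt (a + b) = wt a + wt b :=
  Finsupp.sum_add_index' (fun p => mul_zero _) (fun p v w => mul_add _ v w)

lemma wt_single (p : ℕ × ℕ) (n : ℕ) : wt (Finsupp.single p n) = (p.1 + p.2 + 1) * n :=
  Finsupp.sum_single_index (mul_zero _)

namespace PP

/-- The Hillman–Grassl-type map from plane partitions to fillings. -/
def toF (π : PP) : (ℕ × ℕ) →₀ ℕ :=
  if h : π.f 0 0 = 0 then 0
  else (π.extract h).toF + Finsupp.single π.recd 1
termination_by π.size
decreasing_by exact π.extract_size_lt h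

variable (π : PP)

lemma toF_zero (h : π.f 0 0 = 0) : π.toF = 0 := by rw [toF, dif_pos h]

lemma toF_pos (h : ¬ π.f 0 0 = 0) :
    π.toF = (π.extract h).toF + Finsupp.single π.recd 1 := by rw [toF, dif_neg h]

lemma toF_recd_ne (h : ¬ π.f 0 0 = 0) : π.toF π.recd ≠ 0 := by
  rw [π.toF_pos h]
  rw [Finsupp.add_apply, Finsupp.single_apply, if_pos rfl]
  omega

lemma toF_eq_zero_iff : π.toF = 0 ↔ π.f 0 0 = 0 := by
  constructor
  · intro h
    by_contra h0
    have := π.toF_recd_ne h0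
    rw [h] at this
    simp at this
  · exact π.toF_zero

lemma wt_toF (π : PP) : wt π.toF = π.size := by
  by_cases h : π.f 0 0 = 0
  · rw [π.toF_zero h, π.size_zero_of h]
    simp [wt]
  · rw [π.toF_pos h, wt_add, wt_single, wt_toF (π.extract h), π.extract_size h]
    simp [mul_one]
termination_by π.size
decreasing_by exact π.extract_size_lt h

lemma toF_support (π : PP) (h : ¬ π.f 0 0 = 0) :
    ∀ x ∈ π.toF.support, recLE π.recd x := by
  intro x hx
  rw [π.toF_pos h] at hx
  have hx' := Finsupp.support_add hx
  rw [Finset.mem_union] at hx'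
  rcases hx' with hx1 | hx2
  · by_cases h2 : (π.extract h).f 0 0 = 0
    · rw [(π.extract h).toF_zero h2] at hx1
      simp at hx1
    · exact recLE_trans (π.extract_recLE h h2) ((π.extract h).toF_support h2 x hx1)
  · have : x = π.recd := by
      by_contra hne
      rw [Finsupp.mem_support_iff, Finsupp.single_apply, if_neg (fun he => hne he.symm)] at hx2
      exact hx2 rfl
    rw [this]
    exact recLE_refl _
termination_by π.size
decreasing_by exact π.extract_size_lt h

lemma toF_inj (π : PP) : ∀ τ : PP, π.toF = τ.toF → π = τ := by
  intro τ heq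
  by_cases hπ0 : π.f 0 0 = 0
  · have hτ0 : τ.f 0 0 = 0 := by
      rw [← τ.toF_eq_zero_iff, ← heq, π.toF_eq_zero_iff]
      exact hπ0
    ext i j
    rw [π.f_eq_zero_of_zero hπ0 i j, τ.f_eq_zero_of_zero hτ0 i j]
  · have hτ0 : ¬ τ.f 0 0 = 0 := by
      rw [← τ.toF_eq_zero_iff, ← heq, π.toF_eq_zero_iff] at *
      intro hc
      exact hπ0 hc
    -- equal records
    have hmem1 : τ.recd ∈ π.toF.support := by
      rw [heq, Finsupp.mem_support_iff]
      exact τ.toF_recd_ne hτ0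
    have hmem2 : π.recd ∈ τ.toF.support := by
      rw [← heq, Finsupp.mem_support_iff]
      exact π.toF_recd_ne hπ0
    have hrec : π.recd = τ.recd :=
      recLE_antisymm (π.toF_support hπ0 _ hmem1) (τ.toF_support hτ0 _ hmem2)
    -- equal remainders
    have hrem : (π.extract hπ0).toF = (τ.extract hτ0).toF := by
      ext p
      have h1 := DFunLike.congr_fun heq p
      rw [π.toF_pos hπ0, τ.toF_pos hτ0, hrec] at h1
      simp only [Finsupp.add_apply] at h1
      omega
    have hext : π.extract hπ0 = τ.extract hτ0 := (π.extract hπ0).toF_inj _ hrem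
    rw [← π.ins_extract hπ0, ← τ.ins_extract hτ0, hext, hrec]
termination_by π.size
decreasing_by exact π.extract_size_lt hπ0

/-- The minimal cell of a nonempty finset of cells w.r.t. `recLE`. -/
lemma exists_recLE_min (s : Finset (ℕ × ℕ)) (hs : s.Nonempty) :
    ∃ c ∈ s, ∀ x ∈ s, recLE c x := by
  have him : (s.image Prod.snd).Nonempty := hs.image _
  set b := (s.image Prod.snd).max' him with hb
  have hfilt : (s.filter (fun x => x.2 = b)).Nonempty := by
    obtain ⟨y, hy⟩ := Finset.max'_mem (s.image Prod.snd) him |> Finset.mem_image.mp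
    exact ⟨y, Finset.mem_filter.mpr ⟨hy.1, hy.2⟩⟩
  have him2 : ((s.filter (fun x => x.2 = b)).image Prod.fst).Nonempty := hfilt.image _
  set e := ((s.filter (fun x => x.2 = b)).image Prod.fst).min' him2 with he
  obtain ⟨y, hy1, hy2⟩ := Finset.min'_mem _ him2 |> Finset.mem_image.mp
  rw [Finset.mem_filter] at hy1
  have hyy : y = (e, b) := Prod.ext (hy2.trans he.symm) hy1.2
  refine ⟨(e, b), hyy ▸ hy1.1, ?_⟩
  intro x hx
  have hxb : x.2 ≤ b := Finset.le_max' _ _ (Finset.mem_image_of_mem _ hx)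
  rcases lt_or_eq_of_le hxb with hlt | heq2
  · exact Or.inl hlt
  · refine Or.inr ⟨heq2.symm, ?_⟩
    exact Finset.min'_le _ _ (Finset.mem_image_of_mem _ (Finset.mem_filter.mpr ⟨hx, heq2⟩))

lemma toF_surj : ∀ (n : ℕ) (a : (ℕ × ℕ) →₀ ℕ), wt a = n → ∃ π : PP, π.toF = a := by
  intro n
  induction n using Nat.strong_induction_on with
  | _ n ih =>
    intro a ha
    by_cases ha0 : a = 0
    · exact ⟨PP.zero, by rw [PP.zero.toF_zero rfl, ha0]⟩
    · have hsupp : a.support.Nonempty := Finsupp.support_nonempty_iff.mpr ha0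
      obtain ⟨c, hc_mem, hc_min⟩ := exists_recLE_min a.support hsupp
      have hac : 1 ≤ a c := by
        have := Finsupp.mem_support_iff.mp hc_mem
        omega
      set a' := a - Finsupp.single c 1 with ha'
      have hsum : a' + Finsupp.single c 1 = a := by
        ext p
        rw [Finsupp.add_apply, ha', Finsupp.tsub_apply, Finsupp.single_apply]
        by_cases hp : c = p
        · rw [if_pos hp, ← hp]
          omega
        · rw [if_neg hp]
          omega
      have hwt : wt a' + (c.1 + c.2 + 1) = n := by
        rw [← ha, ← hsum, wt_add, wt_single, mul_one]
      obtain ⟨π', hπ'⟩ := ih (wt a') (by omega) a' rfl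
      have hCond : π'.Cond c := by
        by_cases h0 : π'.f 0 0 = 0
        · exact Or.inl h0
        · rw [π'.Cond_iff_recLE h0]
          apply hc_min
          have : π'.recd ∈ a'.support := by
            rw [← hπ', Finsupp.mem_support_iff]
            exact π'.toF_recd_ne h0
          have hsub : a'.support ⊆ a.support := by
            intro x hx
            rw [Finsupp.mem_support_iff] at hx ⊢
            rw [ha', Finsupp.tsub_apply] at hx
            omega
          exact hsub this
      refine ⟨π'.ins c, ?_⟩
      have h00 := π'.ins_f00 hCond
      rw [(π'.ins c).toF_pos h00, π'.ins_recd hCond]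
      have hext : (π'.ins c).extract h00 = π' := π'.extract_ins hCond
      rw [hext, hπ', hsum]

/-- The Hillman–Grassl bijection on plane partitions of a fixed size. -/
def hgEquiv (n : ℕ) : {π : PP // π.size = n} ≃ {a : (ℕ × ℕ) →₀ ℕ // wt a = n} := by
  apply Equiv.ofBijective (fun x => ⟨x.1.toF, by rw [x.1.wt_toF]; exact x.2⟩)
  constructor
  · rintro ⟨π, hπ⟩ ⟨τ, hτ⟩ h
    have : π.toF = τ.toF := congrArg Subtype.val h
    exact Subtype.ext (π.toF_inj τ this)
  · rintro ⟨a, ha⟩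
    obtain ⟨π, hπ⟩ := toF_surj (wt a) a rfl
    exact ⟨⟨π, by rw [← π.wt_toF, hπ, ha]⟩, Subtype.ext hπ⟩

lemma card_pp_eq_card_fillings (n : ℕ) :
    Nat.card {π : PP // π.size = n} = Nat.card {a : (ℕ × ℕ) →₀ ℕ // wt a = n} :=
  Nat.card_congr (hgEquiv n)


/-! ### Lower sets in `ℕ³` vs plane partitions -/

/-- Downward closed finsets of `ℕ` are initial segments. -/
lemma dcl_mem_iff {K : Finset ℕ} (hK : ∀ k ∈ K, ∀ k', k' ≤ k → k' ∈ K) :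
    ∀ k, k ∈ K ↔ k < K.card := by
  intro k
  constructor
  · intro hk
    have hsub : range (k + 1) ⊆ K := by
      intro x hx
      rw [Finset.mem_range] at hx
      exact hK k hk x (by omega)
    have := Finset.card_le_card hsub
    rw [Finset.card_range] at this
    omega
  · intro hk
    by_contra hkK
    have hsub : K ⊆ range k := by
      intro x hx
      rw [Finset.mem_range]
      by_contra hxk
      exact hkK (hK x hx k (by omega))
    have := Finset.card_le_card hsub
    rw [Finset.card_range] at this
    omega

/-- The number of cubes above position `(i,j)` in a finset of `ℕ³`. -/
def colCard (S : Finset (ℕ × ℕ × ℕ)) (i j : ℕ) : ℕ :=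
  (S.filter (fun t => t.1 = i ∧ t.2.1 = j)).card

lemma colCard_eq_card_K (S : Finset (ℕ × ℕ × ℕ)) (i j : ℕ) :
    colCard S i j = ((S.filter (fun t => t.1 = i ∧ t.2.1 = j)).image (fun t => t.2.2)).card := by
  unfold colCard
  refine (Finset.card_image_of_injOn ?_).symm
  rintro ⟨a, b, c⟩ ht ⟨a', b', c'⟩ ht' he
  rw [Finset.mem_coe, Finset.mem_filter] at ht ht'
  simp only at he ht ht'
  obtain ⟨-, rfl, rfl⟩ := ht
  obtain ⟨-, rfl, rfl⟩ := ht'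
  rw [he]

lemma mem_K_iff (S : Finset (ℕ × ℕ × ℕ)) (i j k : ℕ) :
    k ∈ (S.filter (fun t => t.1 = i ∧ t.2.1 = j)).image (fun t => t.2.2) ↔ (i, j, k) ∈ S := by
  constructor
  · intro hk
    obtain ⟨t, ht, hte⟩ := Finset.mem_image.mp hk
    rw [Finset.mem_filter] at ht
    have : t = (i, j, k) := by
      ext
      · exact ht.2.1
      · exact ht.2.2
      · exact hte
    rw [← this]
    exact ht.1
  · intro hk
    exact Finset.mem_image.mpr ⟨(i,j,k), Finset.mem_filter.mpr ⟨hk, rfl, rfl⟩, rfl⟩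

lemma mem_iff_lt_colCard {S : Finset (ℕ × ℕ × ℕ)} (hS : IsLowerSet (↑S : Set (ℕ × ℕ × ℕ)))
    (i j k : ℕ) : (i, j, k) ∈ S ↔ k < colCard S i j := by
  rw [colCard_eq_card_K, ← mem_K_iff S i j k]
  apply dcl_mem_iff
  intro x hx x' hx'
  rw [mem_K_iff] at hx ⊢
  exact hS (show ((i:ℕ), j, x') ≤ (i, j, x) by
    refine Prod.mk_le_mk.mpr ⟨le_rfl, Prod.mk_le_mk.mpr ⟨le_rfl, hx'⟩⟩) hx

lemma colCard_le {S : Finset (ℕ × ℕ × ℕ)} (hS : IsLowerSet (↑S : Set (ℕ × ℕ × ℕ)))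
    {i j i' j' : ℕ} (hi : i ≤ i') (hj : j ≤ j') : colCard S i' j' ≤ colCard S i j := by
  by_contra hc
  push_neg at hc
  have h1 : (i', j', colCard S i j) ∈ S := (mem_iff_lt_colCard hS _ _ _).mpr hc
  have h2 : (i, j, colCard S i j) ∈ S :=
    hS (Prod.mk_le_mk.mpr ⟨hi, Prod.mk_le_mk.mpr ⟨hj, le_rfl⟩⟩) h1
  have := (mem_iff_lt_colCard hS i j _).mp h2
  omega

/-- The plane partition associated with a finite lower set in `ℕ³`. -/
def ppOfFinset (S : Finset (ℕ × ℕ × ℕ)) (hS : IsLowerSet (↑S : Set (ℕ × ℕ × ℕ))) : PP where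
  f i j := colCard S i j
  dec_i := fun i j => colCard_le hS (by omega) le_rfl
  dec_j := fun i j => colCard_le hS le_rfl (by omega)
  fin := by
    refine ⟨1 + S.sup (fun t => t.1 + t.2.1), ?_, ?_⟩
    · show colCard S _ _ = 0
      unfold colCard
      rw [Finset.card_eq_zero]
      apply Finset.filter_eq_empty_iff.mpr
      intro t ht
      have hb : t.1 + t.2.1 ≤ S.sup (fun t => t.1 + t.2.1) := by simpa using Finset.le_sup (f := fun t => t.1 + t.2.1) ht
      rintro ⟨h1, -⟩
      omega
    · show colCard S _ _ = 0
      unfold colCard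
      rw [Finset.card_eq_zero]
      apply Finset.filter_eq_empty_iff.mpr
      intro t ht
      have hb : t.1 + t.2.1 ≤ S.sup (fun t => t.1 + t.2.1) := by simpa using Finset.le_sup (f := fun t => t.1 + t.2.1) ht
      rintro ⟨-, h2⟩
      omega

lemma ppOfFinset_size {S : Finset (ℕ × ℕ × ℕ)} (hS : IsLowerSet (↑S : Set (ℕ × ℕ × ℕ))) :
    (ppOfFinset S hS).size = S.card := by
  set π := ppOfFinset S hS with hπ
  set N := max π.bound (1 + S.sup (fun t => t.1 + t.2.1)) with hNdef
  rw [← π.sizeUpTo_eq (show π.bound ≤ N by omega)]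
  unfold sizeUpTo
  rw [Finset.card_eq_sum_card_fiberwise (f := fun t => (t.1, t.2.1)) (t := range N ×ˢ range N)]
  · apply Finset.sum_congr rfl
    intro p _
    show colCard S p.1 p.2 = _
    unfold colCard
    congr 1
    apply Finset.filter_congr
    intro t _
    constructor
    · rintro ⟨h1, h2⟩
      exact Prod.ext h1 h2
    · intro h
      exact ⟨congrArg Prod.fst h, congrArg Prod.snd h⟩
  · intro t ht
    have hb : t.1 + t.2.1 ≤ S.sup (fun t => t.1 + t.2.1) := by simpa using Finset.le_sup (f := fun t => t.1 + t.2.1) ht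
    show (t.1, t.2.1) ∈ ((range N ×ˢ range N : Finset (ℕ × ℕ)) : Set (ℕ × ℕ))
    rw [Finset.mem_coe, Finset.mem_product, Finset.mem_range, Finset.mem_range]
    constructor <;> omega

/-- The finite lower set associated with a plane partition. -/
def finsetOfPP (π : PP) : Finset (ℕ × ℕ × ℕ) :=
  (range π.bound ×ˢ range π.bound ×ˢ range (π.f 0 0 + 1)).filter
    (fun t => t.2.2 < π.f t.1 t.2.1)

lemma mem_finsetOfPP (π : PP) (t : ℕ × ℕ × ℕ) :
    t ∈ finsetOfPP π ↔ t.2.2 < π.f t.1 t.2.1 := by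
  unfold finsetOfPP
  rw [Finset.mem_filter]
  constructor
  · exact fun h => h.2
  · intro h
    refine ⟨?_, h⟩
    rw [Finset.mem_product, Finset.mem_product]
    have hb1 : t.1 < π.bound := by
      by_contra hc
      push_neg at hc
      rw [π.vanish (Or.inl hc)] at h
      omega
    have hb2 : t.2.1 < π.bound := by
      by_contra hc
      push_neg at hc
      rw [π.vanish (Or.inr hc)] at h
      omega
    have hb3 : t.2.2 < π.f 0 0 + 1 := by
      have := (π.mono_i (Nat.zero_le t.1) t.2.1).trans (π.mono_j 0 (Nat.zero_le t.2.1))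
      omega
    exact ⟨Finset.mem_range.mpr hb1, Finset.mem_range.mpr hb2, Finset.mem_range.mpr hb3⟩

lemma finsetOfPP_lower (π : PP) : IsLowerSet (↑(finsetOfPP π) : Set (ℕ × ℕ × ℕ)) := by
  intro t t' hle ht
  rw [Finset.mem_coe, mem_finsetOfPP] at ht ⊢
  obtain ⟨h1, h23⟩ := Prod.le_def.mp hle
  obtain ⟨h2, h3⟩ := Prod.le_def.mp h23
  calc t'.2.2 ≤ t.2.2 := h3
    _ < π.f t.1 t.2.1 := ht
    _ ≤ π.f t'.1 t.2.1 := π.mono_i h1 _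
    _ ≤ π.f t'.1 t'.2.1 := π.mono_j _ h2

lemma ppOfFinset_finsetOfPP (π : PP) :
    ppOfFinset (finsetOfPP π) (finsetOfPP_lower π) = π := by
  ext i j
  show colCard (finsetOfPP π) i j = π.f i j
  rw [colCard_eq_card_K]
  have : ((finsetOfPP π).filter (fun t => t.1 = i ∧ t.2.1 = j)).image (fun t => t.2.2) =
      range (π.f i j) := by
    ext k
    rw [mem_K_iff, mem_finsetOfPP, Finset.mem_range]
  rw [this, Finset.card_range]

lemma finsetOfPP_ppOfFinset {S : Finset (ℕ × ℕ × ℕ)}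
    (hS : IsLowerSet (↑S : Set (ℕ × ℕ × ℕ))) :
    finsetOfPP (ppOfFinset S hS) = S := by
  ext t
  rw [mem_finsetOfPP]
  show t.2.2 < colCard S t.1 t.2.1 ↔ _
  rw [← mem_iff_lt_colCard hS]

/-- Lower sets of size `n` in `ℕ³` are equinumerous with plane partitions of size `n`. -/
def lowerSetEquiv (n : ℕ) :
    {S : Finset (ℕ × ℕ × ℕ) // IsLowerSet (↑S : Set (ℕ × ℕ × ℕ)) ∧ S.card = n} ≃
    {π : PP // π.size = n} where
  toFun := fun x => ⟨ppOfFinset x.1 x.2.1, by rw [ppOfFinset_size x.2.1]; exact x.2.2⟩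
  invFun := fun x => ⟨finsetOfPP x.1, finsetOfPP_lower x.1, by
    have h1 : (ppOfFinset (finsetOfPP x.1) (finsetOfPP_lower x.1)).size = (finsetOfPP x.1).card :=
      ppOfFinset_size (finsetOfPP_lower x.1)
    rw [ppOfFinset_finsetOfPP] at h1
    rw [← h1]
    exact x.2⟩
  left_inv := fun x => Subtype.ext (finsetOfPP_ppOfFinset x.2.1)
  right_inv := fun x => Subtype.ext (ppOfFinset_finsetOfPP x.1)

end PP

/-! ### Counting fillings via power series coefficients -/

open PowerSeries

/-- The power series `1/(1 - X^k) = ∑ X^{k i}`. -/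
def Dk (k : ℕ) : PowerSeries ℤ := PowerSeries.mk fun n => if k ∣ n then 1 else 0

lemma coeff_Dk (k n : ℕ) : (coeff n) (Dk k) = if k ∣ n then 1 else 0 := coeff_mk n _

lemma one_sub_pow_mul_Dk {k : ℕ} (hk : 0 < k) : (1 - X ^ k) * Dk k = (1 : PowerSeries ℤ) := by
  ext n
  rw [sub_mul, one_mul, map_sub, coeff_X_pow_mul' (Dk k) k n, coeff_Dk]
  by_cases hn : n = 0
  · subst hn
    rw [if_pos (Nat.dvd_zero k), if_neg (show ¬ k ≤ 0 by omega)]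
    simp
  · rw [PowerSeries.coeff_one, if_neg hn]
    by_cases hkn : k ≤ n
    · rw [if_pos hkn, coeff_Dk]
      have hdvd : k ∣ n - k ↔ k ∣ n := by
        constructor
        · intro h
          have := Nat.dvd_add h (dvd_refl k)
          rwa [Nat.sub_add_cancel hkn] at this
        · intro h
          exact Nat.dvd_sub h (dvd_refl k)
      by_cases h : k ∣ n
      · rw [if_pos h, if_pos (hdvd.mpr h)]
        ring
      · rw [if_neg h, if_neg (fun hc => h (hdvd.mp hc))]
        ring
    · rw [if_neg hkn, if_neg (fun h => hkn (Nat.le_of_dvd (by omega) h))]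
      ring

lemma ringInverse_one_sub_pow (k m : ℕ) (hk : 0 < k) :
    Ring.inverse ((1 - X ^ k) ^ m) = (Dk k) ^ m := by
  have h : ((1 - X ^ k) ^ m) * ((Dk k) ^ m) = 1 := by
    rw [← mul_pow, one_sub_pow_mul_Dk hk, one_pow]
  have h' : ((Dk k) ^ m) * ((1 - X ^ k) ^ m) = 1 := by rw [mul_comm]; exact h
  exact Ring.inverse_unit ⟨(1 - X ^ k) ^ m, (Dk k) ^ m, h, h'⟩

/-- The set of cells whose hook weight (minus one) lies in `s`. -/
def Tcells (s : Finset ℕ) : Finset (ℕ × ℕ) :=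
  s.biUnion (fun m => (range (m + 1)).image (fun c => (c, m - c)))

lemma mem_Tcells (s : Finset ℕ) (p : ℕ × ℕ) : p ∈ Tcells s ↔ p.1 + p.2 ∈ s := by
  unfold Tcells
  rw [Finset.mem_biUnion]
  constructor
  · rintro ⟨m, hm, hp⟩
    obtain ⟨c, hc, rfl⟩ := Finset.mem_image.mp hp
    rw [Finset.mem_range] at hc
    have he : c + (m - c) = m := by omega
    show c + (m - c) ∈ s
    rwa [he]
  · intro hp
    refine ⟨p.1 + p.2, hp, Finset.mem_image.mpr ⟨p.1, Finset.mem_range.mpr (by omega), ?_⟩⟩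
    have he : p.1 + p.2 - p.1 = p.2 := by omega
    rw [he]

lemma prod_Tcells (s : Finset ℕ) :
    ∏ p ∈ Tcells s, Dk (p.1 + p.2 + 1) = ∏ m ∈ s, (Dk (m + 1)) ^ (m + 1) := by
  unfold Tcells
  rw [Finset.prod_biUnion]
  · apply Finset.prod_congr rfl
    intro m _
    rw [Finset.prod_image]
    · have hc : ∀ c ∈ range (m + 1), Dk ((c, m - c).1 + (c, m - c).2 + 1) = Dk (m + 1) := by
        intro c hcm
        rw [Finset.mem_range] at hcm
        have he : (c, m - c).1 + (c, m - c).2 + 1 = m + 1 := by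
          show c + (m - c) + 1 = m + 1
          omega
        rw [he]
      rw [Finset.prod_congr rfl hc, Finset.prod_const, Finset.card_range]
    · intro c _ c' _ h
      exact congrArg Prod.fst h
  · intro m hm m' hm' hne
    apply Finset.disjoint_left.mpr
    intro p hp hp'
    obtain ⟨c, hc, rfl⟩ := Finset.mem_image.mp hp
    obtain ⟨c', hc', he⟩ := Finset.mem_image.mp hp'
    rw [Finset.mem_range] at hc hc'
    apply hne
    have h1 : c' = c := congrArg Prod.fst he
    have h2 : m' - c' = m - c := congrArg Prod.snd he
    omega

/-- Scaling a filling up to a composition-like finsupp. -/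
def scaleUp (a : (ℕ × ℕ) →₀ ℕ) : (ℕ × ℕ) →₀ ℕ :=
  ⟨a.support, fun p => (p.1 + p.2 + 1) * a p, by
    intro p
    rw [Finsupp.mem_support_iff]
    show a p ≠ 0 ↔ (p.1 + p.2 + 1) * a p ≠ 0
    rw [Nat.mul_ne_zero_iff]
    omega⟩

lemma scaleUp_apply (a : (ℕ × ℕ) →₀ ℕ) (p : ℕ × ℕ) :
    scaleUp a p = (p.1 + p.2 + 1) * a p := rfl

lemma scaleUp_support (a : (ℕ × ℕ) →₀ ℕ) : (scaleUp a).support = a.support := rfl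

/-- Scaling a composition-like finsupp down to a filling. -/
def scaleDown (l : (ℕ × ℕ) →₀ ℕ) : (ℕ × ℕ) →₀ ℕ :=
  ⟨l.support.filter (fun p => p.1 + p.2 + 1 ≤ l p), fun p => l p / (p.1 + p.2 + 1), by
    intro p
    rw [Finset.mem_filter, Finsupp.mem_support_iff]
    show (l p ≠ 0 ∧ p.1 + p.2 + 1 ≤ l p) ↔ l p / (p.1 + p.2 + 1) ≠ 0
    rw [Nat.div_ne_zero_iff]
    omega⟩

lemma scaleDown_apply (l : (ℕ × ℕ) →₀ ℕ) (p : ℕ × ℕ) :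
    scaleDown l p = l p / (p.1 + p.2 + 1) := rfl

lemma wt_support_le {a : (ℕ × ℕ) →₀ ℕ} {p : ℕ × ℕ} (hp : p ∈ a.support) :
    p.1 + p.2 + 1 ≤ wt a := by
  have h1 : (p.1 + p.2 + 1) * a p ≤ wt a := by
    unfold wt Finsupp.sum
    exact Finset.single_le_sum (f := fun q => (q.1 + q.2 + 1) * a q)
      (fun q _ => Nat.zero_le _) hp
  have h2 : a p ≠ 0 := Finsupp.mem_support_iff.mp hp
  have h3 : (p.1 + p.2 + 1) * 1 ≤ (p.1 + p.2 + 1) * a p :=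
    Nat.mul_le_mul_left _ (by omega)
  omega

section MainCount

variable {s : Finset ℕ} {n : ℕ}

open scoped Classical in
/-- The set of "good" compositions counted by the coefficient. -/
def goodSet (s : Finset ℕ) (n : ℕ) : Finset ((ℕ × ℕ) →₀ ℕ) :=
  (finsuppAntidiag (Tcells s) n).filter (fun l => ∀ p ∈ Tcells s, (p.1 + p.2 + 1) ∣ l p)

open scoped Classical in
lemma mem_goodSet (l : (ℕ × ℕ) →₀ ℕ) :
    l ∈ goodSet s n ↔ ((Tcells s).sum l = n ∧ l.support ⊆ Tcells s) ∧
      ∀ p ∈ Tcells s, (p.1 + p.2 + 1) ∣ l p := by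
  unfold goodSet
  rw [Finset.mem_filter, mem_finsuppAntidiag]

lemma scaleUp_mem (hs : range n ⊆ s) {a : (ℕ × ℕ) →₀ ℕ} (ha : wt a = n) :
    scaleUp a ∈ goodSet s n := by
  rw [mem_goodSet]
  have hsupp : (scaleUp a).support ⊆ Tcells s := by
    rw [scaleUp_support]
    intro p hp
    rw [mem_Tcells]
    have := wt_support_le hp
    exact hs (Finset.mem_range.mpr (by omega))
  refine ⟨⟨?_, hsupp⟩, ?_⟩
  · rw [← Finset.sum_subset hsupp (fun x _ hx => Finsupp.notMem_support_iff.mp hx), ← ha]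
    rw [scaleUp_support]
    rfl
  · intro p _
    rw [scaleUp_apply]
    exact Dvd.intro _ rfl

lemma scaleDown_wt {l : (ℕ × ℕ) →₀ ℕ} (hl : l ∈ goodSet s n) : wt (scaleDown l) = n := by
  rw [mem_goodSet] at hl
  obtain ⟨⟨hsum, hsupp⟩, hdvd⟩ := hl
  have hdvd' : ∀ p ∈ l.support, (p.1 + p.2 + 1) ∣ l p := fun p hp => hdvd p (hsupp hp)
  have hsuppeq : (scaleDown l).support = l.support := by
    apply Finset.filter_true_of_mem
    intro p hp
    exact Nat.le_of_dvd (by have := Finsupp.mem_support_iff.mp hp; omega) (hdvd' p hp)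
  unfold wt Finsupp.sum
  rw [hsuppeq]
  have hterm : ∀ p ∈ l.support, (p.1 + p.2 + 1) * (scaleDown l p) = l p := by
    intro p hp
    rw [scaleDown_apply]
    exact Nat.mul_div_cancel' (hdvd' p hp)
  rw [Finset.sum_congr rfl hterm, ← hsum]
  exact Finset.sum_subset hsupp (fun x _ hx => Finsupp.notMem_support_iff.mp hx)

lemma scaleUp_scaleDown {l : (ℕ × ℕ) →₀ ℕ} (hl : l ∈ goodSet s n) :
    scaleUp (scaleDown l) = l := by
  rw [mem_goodSet] at hl
  obtain ⟨⟨hsum, hsupp⟩, hdvd⟩ := hl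
  ext p
  rw [scaleUp_apply, scaleDown_apply]
  by_cases hp : l p = 0
  · rw [hp, Nat.zero_div, mul_zero]
  · exact Nat.mul_div_cancel' (hdvd p (hsupp (Finsupp.mem_support_iff.mpr hp)))

lemma scaleDown_scaleUp (a : (ℕ × ℕ) →₀ ℕ) : scaleDown (scaleUp a) = a := by
  ext p
  rw [scaleDown_apply, scaleUp_apply]
  exact Nat.mul_div_cancel_left _ (by omega)

/-- The fillings of weight `n` are in bijection with `goodSet s n`. -/
def goodEquiv (hs : range n ⊆ s) :
    {a : (ℕ × ℕ) →₀ ℕ // wt a = n} ≃ {l : (ℕ × ℕ) →₀ ℕ // l ∈ goodSet s n} where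
  toFun := fun x => ⟨scaleUp x.1, scaleUp_mem hs x.2⟩
  invFun := fun x => ⟨scaleDown x.1, scaleDown_wt x.2⟩
  left_inv := fun x => Subtype.ext (scaleDown_scaleUp x.1)
  right_inv := fun x => Subtype.ext (scaleUp_scaleDown x.2)

open scoped Classical in
lemma main_count (hs : range n ⊆ s) :
    (coeff n) (∏ m ∈ s, (Dk (m + 1)) ^ (m + 1)) =
      (Nat.card {a : (ℕ × ℕ) →₀ ℕ // wt a = n} : ℤ) := by
  rw [← prod_Tcells, PowerSeries.coeff_prod]
  have hterm : ∀ l ∈ finsuppAntidiag (Tcells s) n,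
      (∏ p ∈ Tcells s, (coeff (l p)) (Dk (p.1 + p.2 + 1))) =
      if (∀ p ∈ Tcells s, (p.1 + p.2 + 1) ∣ l p) then 1 else 0 := by
    intro l _
    rw [← Finset.prod_boole]
    apply Finset.prod_congr rfl
    intro p _
    rw [coeff_Dk]
  rw [Finset.sum_congr rfl hterm, Finset.sum_boole]
  congr 1
  have h1 : Nat.card {a : (ℕ × ℕ) →₀ ℕ // wt a = n} = Nat.card {l // l ∈ goodSet s n} :=
    Nat.card_congr (goodEquiv hs)
  have h2 : Nat.card {l // l ∈ goodSet s n} = (goodSet s n).card :=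
    Nat.card_eq_finsetCard _
  rw [h1, h2]
  rfl

end MainCount

end MacMahonAux








/-- **MacMahon's formula.**
`∑_{n=0}^∞ pp(n) qⁿ = ∏_{m=1}^∞ (1 - q^m)^{-m}` in `ℤ⟦q⟧`. -/
theorem macmahon_formula (M : PowerSeries ℤ) (hM : IsMacMahon M) :
    (PowerSeries.mk fun n => (pp n : ℤ)) = M := by
  apply PowerSeries.ext
  intro n
  rw [PowerSeries.coeff_mk]
  obtain ⟨s₀, hs₀⟩ := hM n
  have h1 := hs₀ (s₀ ∪ range n) Finset.subset_union_left
  have h2 : (∏ m ∈ s₀ ∪ range n,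
        Ring.inverse ((1 - (PowerSeries.X : PowerSeries ℤ) ^ (m + 1)) ^ (m + 1))) =
      ∏ m ∈ s₀ ∪ range n, (MacMahonAux.Dk (m + 1)) ^ (m + 1) :=
    Finset.prod_congr rfl
      (fun m _ => MacMahonAux.ringInverse_one_sub_pow (m + 1) (m + 1) (by omega))
  have h3 := MacMahonAux.main_count (s := s₀ ∪ range n) (n := n) Finset.subset_union_right
  have h4 : Nat.card {a : (ℕ × ℕ) →₀ ℕ // MacMahonAux.wt a = n} = pp n := by
    unfold pp
    rw [← MacMahonAux.PP.card_pp_eq_card_fillings n]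
    exact (Nat.card_congr (MacMahonAux.PP.lowerSetEquiv n)).symm
  rw [← h1, h2, h3, h4]

end
end
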